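/- arXiv:2212.11390 — 7 statements merged into one kernel-verified Lean document; each statement's English description precedes it below -/
import Mathlib

section
/- For all complex numbers ξ and η with η ≠ 0 and ξ/η not a negative real number, if ϑ = |Arg(ξ/η)|, then |ξ − η| ≥ (|ξ| + |η|)·sin(ϑ/2). -/
lemma aux_sin_half (z : ℂ) :
    (‖z‖ + 1) * Real.sin (|Complex.arg z| / 2) ≤ ‖z - 1‖ := by
  rcases eq_or_ne z 0 with rfl | hz
  · simp
  · have hargle : |Complex.arg z| ≤ Real.pi := abs_le.mpr ⟨(Complex.neg_pi_lt_arg z).le, Complex.arg_le_pi z⟩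
    have hs0 : 0 ≤ Real.sin (|Complex.arg z| / 2) := by
      apply Real.sin_nonneg_of_nonneg_of_le_pi
      · positivity
      · linarith [Real.pi_pos]
    have hsq : Real.sin (|Complex.arg z| / 2) ^ 2 = (1 - Real.cos (Complex.arg z)) / 2 := by
      rw [Real.sin_sq_eq_half_sub]
      rw [show 2 * (|Complex.arg z| / 2) = |Complex.arg z| by ring, Real.cos_abs]
      ring
    have hc : Real.cos (Complex.arg z) = z.re / ‖z‖ := Complex.cos_arg hz
    have habs : 0 < ‖z‖ := norm_pos_iff.mpr hz
    have hre : -‖z‖ ≤ z.re := neg_abs_le z.re |>.trans' (neg_le_neg (Complex.abs_re_le_norm z))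
    have hsub : ‖z - 1‖ ^ 2 = ‖z‖ ^ 2 - 2 * z.re + 1 := by
      rw [← Complex.normSq_eq_norm_sq, ← Complex.normSq_eq_norm_sq]
      simp [Complex.normSq_sub, Complex.normSq_apply, Complex.mul_re]
      ring
    have hrele : z.re ≤ ‖z‖ := (Complex.abs_re_le_norm z).trans' (le_abs_self _)
    have h2 : ((‖z‖ + 1) * Real.sin (|Complex.arg z| / 2)) ^ 2 ≤ ‖z - 1‖ ^ 2 := by
      have hcre : z.re = Real.cos (Complex.arg z) * ‖z‖ := by
        rw [hc]; field_simp
      rw [mul_pow, hsq, hsub, hcre]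
      nlinarith [Real.neg_one_le_cos (Complex.arg z), Real.cos_le_one (Complex.arg z),
        mul_nonneg (sq_nonneg (‖z‖ - 1)) (by linarith [Real.neg_one_le_cos (Complex.arg z)] : (0:ℝ) ≤ 1 + Real.cos (Complex.arg z))]
    have hL : 0 ≤ (‖z‖ + 1) * Real.sin (|Complex.arg z| / 2) := by positivity
    nlinarith [h2, hL, norm_nonneg (z - 1)]

/-- If `ξ/η` is not a negative real number and `ϑ = |Arg(ξ/η)|`, then
`|ξ − η| ≥ (|ξ| + |η|)·sin(ϑ/2)`. -/
theorem stmt_0 (ξ η : ℂ) (hη : η ≠ 0) (hneg : ∀ r : ℝ, r < 0 → ξ / η ≠ (r : ℂ)) :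
    (‖ξ‖ + ‖η‖) * Real.sin (|Complex.arg (ξ / η)| / 2)
      ≤ ‖ξ - η‖ := by
  have h := aux_sin_half (ξ / η)
  have hη' : ‖η‖ ≠ 0 := norm_ne_zero_iff.mpr hη
  have hdiv : ‖ξ / η‖ = ‖ξ‖ / ‖η‖ := norm_div _ _
  have hsub : ‖ξ - η‖ = ‖ξ / η - 1‖ * ‖η‖ := by
    rw [← norm_mul, sub_mul, div_mul_cancel₀ _ hη, one_mul]
  rw [hsub]
  calc (‖ξ‖ + ‖η‖) * Real.sin (|Complex.arg (ξ / η)| / 2)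
      = ((‖ξ / η‖ + 1) * Real.sin (|Complex.arg (ξ / η)| / 2)) * ‖η‖ := by
        rw [hdiv]; field_simp
    _ ≤ ‖ξ / η - 1‖ * ‖η‖ := by
        apply mul_le_mul_of_nonneg_right h (norm_nonneg _)
end

section
/- If f is a non-zero Rogers function, then |f(ξ)| is a non-decreasing function of ξ ∈ (0, ∞); that is, for 0 < ξ₁ ≤ ξ₂ one has |f(ξ₁)| ≤ |f(ξ₂)|. -/
open Complex Metric Set

lemma rogers_isOpenU : IsOpen {ξ : ℂ | 0 < ξ.re} := isOpen_lt continuous_const continuous_re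

/-- If Re F vanishes somewhere, F is constant on the half-plane. -/
lemma rogers_const_of_re_eq_zero {F : ℂ → ℂ}
    (hF : DifferentiableOn ℂ F {ξ : ℂ | 0 < ξ.re})
    (hnn : ∀ ξ : ℂ, 0 < ξ.re → 0 ≤ (F ξ).re)
    {x₀ : ℂ} (hx₀ : 0 < x₀.re) (h0 : (F x₀).re = 0) :
    ∀ ξ : ℂ, 0 < ξ.re → F ξ = F x₀ := by
  have hU : IsOpen {ξ : ℂ | 0 < ξ.re} := rogers_isOpenU
  have hconv : Convex ℝ {ξ : ℂ | 0 < ξ.re} := convex_halfSpace_re_gt 0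
  set h : ℂ → ℂ := fun ξ => Complex.exp (-F ξ) with hh
  have hd : DifferentiableOn ℂ h {ξ : ℂ | 0 < ξ.re} := hF.neg.cexp
  have hmax : IsMaxOn (norm ∘ h) {ξ : ℂ | 0 < ξ.re} x₀ := by
    intro ξ hξ
    simp only [Function.comp_apply, hh, Complex.norm_exp, neg_re, h0, neg_zero]
    exact Real.exp_le_exp.2 (by simpa using hnn ξ hξ)
  have heq : EqOn h (Function.const ℂ (h x₀)) {ξ : ℂ | 0 < ξ.re} :=
    Complex.eqOn_of_isPreconnected_of_isMaxOn_norm hconv.isPreconnected hU hd hx₀ hmax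
  have hderiv0 : ∀ ξ ∈ {ξ : ℂ | 0 < ξ.re}, deriv F ξ = 0 := by
    intro ξ hξ
    have hFat : DifferentiableAt ℂ F ξ := (hF.differentiableAt (hU.mem_nhds hξ))
    have hhd : HasDerivAt h (Complex.exp (-F ξ) * -deriv F ξ) ξ := hFat.hasDerivAt.neg.cexp
    have hh0 : HasDerivAt h 0 ξ :=
      (hasDerivAt_const ξ (h x₀)).congr_of_eventuallyEq
        (Filter.eventuallyEq_of_mem (hU.mem_nhds hξ) heq)
    have := hhd.unique hh0
    have hexp := Complex.exp_ne_zero (-F ξ)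
    rcases mul_eq_zero.1 this with h | h
    · exact absurd h hexp
    · exact neg_eq_zero.1 h
  intro ξ hξ
  refine hconv.is_const_of_fderivWithin_eq_zero hF ?_ hξ hx₀
  intro y hy
  rw [fderivWithin_of_isOpen hU hy]
  have hFat : DifferentiableAt ℂ F y := hF.differentiableAt (hU.mem_nhds hy)
  have h1 : HasDerivAt F 0 y := by
    have := hFat.hasDerivAt
    rwa [hderiv0 y hy] at this
  have h2 := h1.hasFDerivAt
  have h3 : (ContinuousLinearMap.toSpanSingleton ℂ (0 : ℂ)) = 0 := by
    ext; simp
  rw [h3] at h2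
  exact h2.fderiv


/-- Schwarz–Pick bound on the right half-plane: `‖F'(x)‖ ≤ Re F(x) / x` for `x > 0`. -/
lemma rogers_schwarz {F : ℂ → ℂ}
    (hF : DifferentiableOn ℂ F {ξ : ℂ | 0 < ξ.re})
    (hpos : ∀ ξ : ℂ, 0 < ξ.re → 0 < (F ξ).re)
    {x : ℝ} (hx : 0 < x) :
    ‖deriv F (x : ℂ)‖ ≤ (F (x : ℂ)).re / x := by
  have hU : IsOpen {ξ : ℂ | 0 < ξ.re} := isOpen_lt continuous_const continuous_re
  have hxmem : (x : ℂ) ∈ {ξ : ℂ | 0 < ξ.re} := by simpa using hx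
  set a : ℂ := F (x : ℂ) with ha
  have hare : 0 < a.re := hpos _ hxmem
  set φ : ℂ → ℂ := fun z => (x : ℂ) * (1 + z) / (1 - z) with hφdef
  set ψ : ℂ → ℂ := fun w => (w - a) / (w + (starRingEnd ℂ) a) with hψdef
  set G : ℂ → ℂ := fun z => ψ (F (φ z)) with hGdef
  -- φ maps the unit ball into the half-plane
  have hmapφ : ∀ z ∈ ball (0 : ℂ) 1, 0 < (φ z).re := by
    intro z hz
    rw [mem_ball_zero_iff] at hz
    have hza : ‖z‖ < 1 := by exact hz
    have hz2 : normSq z < 1 := by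
      rw [← Complex.sq_norm]; nlinarith [norm_nonneg z]
    have hdenpos : 0 < normSq (1 - z) := by
      refine normSq_pos.2 (fun h => ?_)
      have hz1 : z = 1 := by linear_combination -h
      rw [hz1] at hza; simp at hza
    have hre : (φ z).re = x * (1 - normSq z) / normSq (1 - z) := by
      rw [hφdef]
      simp only [Complex.div_re, Complex.normSq_apply, Complex.mul_re, Complex.mul_im,
        Complex.ofReal_re, Complex.ofReal_im, Complex.add_re, Complex.add_im, Complex.one_re,
        Complex.one_im, Complex.sub_re, Complex.sub_im]
      ring
    rw [hre]
    exact div_pos (mul_pos hx (by linarith)) hdenpos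
  -- ψ maps the open half-plane into the unit ball
  have hmapψ : ∀ w : ℂ, 0 < w.re → ‖ψ w‖ < 1 := by
    intro w hw
    have hdenne : w + (starRingEnd ℂ) a ≠ 0 := by
      intro h
      have := congrArg Complex.re h
      simp at this
      linarith
    have hlt : normSq (w - a) < normSq (w + (starRingEnd ℂ) a) := by
      simp only [Complex.normSq_apply, Complex.sub_re, Complex.sub_im, Complex.add_re,
        Complex.add_im, Complex.conj_re, Complex.conj_im]
      nlinarith
    rw [hψdef]
    simp only [norm_div]
    rw [div_lt_one (norm_pos_iff.mpr hdenne), Complex.norm_def, Complex.norm_def]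
    exact Real.sqrt_lt_sqrt (normSq_nonneg _) hlt
  -- G is differentiable on the unit ball
  have hGd : DifferentiableOn ℂ G (ball (0 : ℂ) 1) := by
    intro z hz
    have hz1 : (1 : ℂ) - z ≠ 0 := by
      intro h
      have hz1' : z = 1 := by linear_combination -h
      rw [hz1'] at hz; simp [mem_ball_zero_iff] at hz
    have hφz : DifferentiableAt ℂ φ z :=
      (((differentiableAt_const _).add differentiableAt_id).const_mul _).div
        ((differentiableAt_const _).sub differentiableAt_id) hz1
    have hFz : DifferentiableAt ℂ F (φ z) := hF.differentiableAt (hU.mem_nhds (hmapφ z hz))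
    have hreF : 0 < (F (φ z)).re := hpos _ (hmapφ z hz)
    have hdenne : F (φ z) + (starRingEnd ℂ) a ≠ 0 := by
      intro h
      have := congrArg Complex.re h
      simp at this
      linarith
    have hψz : DifferentiableAt ℂ ψ (F (φ z)) :=
      (differentiableAt_id.sub_const a).div (differentiableAt_id.add_const _) hdenne
    have hGz : DifferentiableAt ℂ (ψ ∘ F ∘ φ) z := hψz.comp z (hFz.comp z hφz)
    exact hGz.differentiableWithinAt
  have hφ0 : φ 0 = (x : ℂ) := by simp [hφdef]
  have hG0 : G 0 = 0 := by
    rw [hGdef]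
    simp only [hφ0, ← ha, hψdef, sub_self, zero_div]
  have hmaps : MapsTo G (ball (0 : ℂ) 1) (ball (G 0) 1) := by
    intro z hz
    rw [hG0, mem_ball_zero_iff]
    exact hmapψ _ (hpos _ (hmapφ z hz))
  have hsch := Complex.norm_deriv_le_div_of_mapsTo_ball hGd (hmaps.mono_right ball_subset_closedBall) one_pos
  -- compute `deriv G 0`
  have hφ' : HasDerivAt φ (2 * (x : ℂ)) 0 := by
    have h1 : HasDerivAt (fun z : ℂ => (x : ℂ) * (1 + z)) ((x : ℂ) * 1) 0 :=
      ((hasDerivAt_id (0 : ℂ)).const_add 1).const_mul (x : ℂ)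
    have h2 : HasDerivAt (fun z : ℂ => 1 - z) (-1) 0 := (hasDerivAt_id (0 : ℂ)).const_sub 1
    have h3 := h1.div h2 (by norm_num)
    refine h3.congr_deriv ?_
    norm_num
    ring
  have hFd : HasDerivAt F (deriv F (x : ℂ)) (x : ℂ) :=
    (hF.differentiableAt (hU.mem_nhds hxmem)).hasDerivAt
  have hadd : a + (starRingEnd ℂ) a ≠ 0 := by
    rw [Complex.add_conj]
    intro h
    have h2 : (2 * a.re : ℝ) = 0 := by exact_mod_cast h
    linarith
  have hψ' : HasDerivAt ψ (1 / (a + (starRingEnd ℂ) a)) a := by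
    have h1 : HasDerivAt (fun w : ℂ => w - a) 1 a := (hasDerivAt_id a).sub_const a
    have h2 : HasDerivAt (fun w : ℂ => w + (starRingEnd ℂ) a) 1 a := (hasDerivAt_id a).add_const _
    have h3 := h1.div h2 hadd
    refine h3.congr_deriv ?_
    field_simp
    ring
  have hGd' : HasDerivAt G (1 / (a + (starRingEnd ℂ) a) * (deriv F (x : ℂ) * (2 * (x : ℂ)))) 0 := by
    have hF0 : HasDerivAt F (deriv F (x : ℂ)) (φ 0) := by rw [hφ0]; exact hFd
    have hcomp1 : HasDerivAt (fun z => F (φ z)) (deriv F (x : ℂ) * (2 * (x : ℂ))) 0 :=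
      hF0.comp 0 hφ'
    have hψa : HasDerivAt ψ (1 / (a + (starRingEnd ℂ) a)) (F (φ 0)) := by
      rw [hφ0, ← ha]; exact hψ'
    exact hψa.comp 0 hcomp1
  rw [hGd'.deriv] at hsch
  have habs : ‖1 / (a + (starRingEnd ℂ) a) * (deriv F (x : ℂ) * (2 * (x : ℂ)))‖
      = 1 / (2 * a.re) * (‖deriv F (x : ℂ)‖ * (2 * x)) := by
    rw [norm_mul, norm_mul, norm_div, norm_one, Complex.add_conj]
    rw [show (2 * (x : ℂ)) = ((2 * x : ℝ) : ℂ) by push_cast; ring]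
    rw [Complex.norm_real, Complex.norm_real, Real.norm_eq_abs, Real.norm_eq_abs, abs_of_pos (by positivity),
      abs_of_pos (by positivity)]
  rw [habs] at hsch
  have hsch' : 1 / (2 * a.re) * (‖deriv F (x : ℂ)‖ * (2 * x)) ≤ 1 := by
    simpa using hsch
  rw [one_div, inv_mul_le_iff₀ (by positivity)] at hsch'
  rw [le_div_iff₀ hx]
  linarith


/-- A Rogers function: holomorphic on the right half-plane `{Re ξ > 0}` with
`Re(f(ξ)/ξ) ≥ 0` there. -/
def IsRogers (f : ℂ → ℂ) : Prop :=
  DifferentiableOn ℂ f {ξ : ℂ | 0 < ξ.re} ∧ ∀ ξ : ℂ, 0 < ξ.re → 0 ≤ (f ξ / ξ).re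

/-- If `f` is a non-zero Rogers function, then `|f|` is non-decreasing on `(0, ∞)`. -/
theorem stmt_7 (f : ℂ → ℂ) (hf : IsRogers f)
    (hnz : ∃ ξ : ℂ, 0 < ξ.re ∧ f ξ ≠ 0)
    (x₁ x₂ : ℝ) (h₁ : 0 < x₁) (h₁₂ : x₁ ≤ x₂) :
    ‖f x₁‖ ≤ ‖f x₂‖ := by
  have hU : IsOpen {ξ : ℂ | 0 < ξ.re} := isOpen_lt continuous_const continuous_re
  set F : ℂ → ℂ := fun ξ => f ξ / ξ with hFdef
  have hne0 : ∀ ξ : ℂ, 0 < ξ.re → ξ ≠ 0 := by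
    intro ξ hξ h; rw [h] at hξ; simp at hξ
  have hFdiff : DifferentiableOn ℂ F {ξ : ℂ | 0 < ξ.re} :=
    hf.1.div differentiableOn_id fun ξ hξ => hne0 ξ hξ
  have hfeq : ∀ ξ : ℂ, 0 < ξ.re → f ξ = ξ * F ξ := by
    intro ξ hξ
    rw [hFdef, ← mul_div_assoc]
    exact (mul_div_cancel_left₀ (f ξ) (hne0 ξ hξ)).symm
  by_cases hconst : ∃ ξ₀ : ℂ, 0 < ξ₀.re ∧ (F ξ₀).re = 0
  · -- degenerate case : f ξ = c * ξ
    obtain ⟨ξ₀, hξ₀, h0⟩ := hconst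
    have hc := rogers_const_of_re_eq_zero hFdiff hf.2 hξ₀ h0
    have habs : ∀ x : ℝ, 0 < x → ‖f x‖ = ‖F ξ₀‖ * x := by
      intro x hx
      have hmem : (0:ℝ) < (x:ℂ).re := by simpa using hx
      rw [hfeq _ hmem, hc _ hmem, norm_mul, Complex.norm_real, Real.norm_eq_abs, abs_of_pos hx, mul_comm]
    rw [habs x₁ h₁, habs x₂ (lt_of_lt_of_le h₁ h₁₂)]
    have := norm_nonneg (F ξ₀)
    nlinarith
  · -- nondegenerate case : Re F > 0 everywhere
    push_neg at hconst
    have hpos : ∀ ξ : ℂ, 0 < ξ.re → 0 < (F ξ).re := by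
      intro ξ hξ
      exact lt_of_le_of_ne (hf.2 ξ hξ) (Ne.symm (hconst ξ hξ))
    -- derivative of f on the positive real axis
    have hkey : ∀ x : ℝ, 0 < x →
        HasDerivAt (fun y : ℝ => Complex.normSq (f y))
          (2 * ((f x).re * (deriv f x).re + (f x).im * (deriv f x).im)) x ∧
        0 ≤ 2 * ((f x).re * (deriv f x).re + (f x).im * (deriv f x).im) := by
      intro x hx
      have hmem : (x : ℂ) ∈ {ξ : ℂ | 0 < ξ.re} := by simpa using hx
      have hFat : DifferentiableAt ℂ F (x : ℂ) := hFdiff.differentiableAt (hU.mem_nhds hmem)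
      set a : ℂ := F (x : ℂ) with ha
      set b : ℂ := deriv F (x : ℂ) with hb
      -- product rule : deriv f x = a + x * b
      have hprod : HasDerivAt f (a + (x : ℂ) * b) (x : ℂ) := by
        have h1 : HasDerivAt (fun ξ : ℂ => ξ * F ξ) (1 * F (x : ℂ) + (x : ℂ) * b) (x : ℂ) :=
          (hasDerivAt_id (x : ℂ)).mul hFat.hasDerivAt
        rw [one_mul, ← ha] at h1
        refine h1.congr_of_eventuallyEq ?_
        exact Filter.eventuallyEq_of_mem (hU.mem_nhds hmem) fun ξ hξ => hfeq ξ hξ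
      have hfx : f (x : ℂ) = (x : ℂ) * a := hfeq _ (by simpa using hx)
      have hd : deriv f (x : ℂ) = a + (x : ℂ) * b := hprod.deriv
      constructor
      · -- has deriv
        have hg : HasDerivAt (fun y : ℝ => f y) (deriv f (x : ℂ)) x := hprod.deriv ▸ hprod.comp_ofReal
        have hre : HasDerivAt (fun y : ℝ => (f y).re) ((deriv f (x : ℂ)).re) x :=
          (Complex.reCLM.hasFDerivAt.comp_hasDerivAt x hg :)
        have him : HasDerivAt (fun y : ℝ => (f y).im) ((deriv f (x : ℂ)).im) x :=
          (Complex.imCLM.hasFDerivAt.comp_hasDerivAt x hg :)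
        have := (hre.mul hre).add (him.mul him)
        have heq : (fun y : ℝ => Complex.normSq (f y)) =
            fun y : ℝ => (f y).re * (f y).re + (f y).im * (f y).im := by
          funext y; rw [Complex.normSq_apply]
        rw [heq]
        refine this.congr_deriv ?_
        ring
      · -- nonnegativity
        have hsch : ‖b‖ ≤ a.re / x := rogers_schwarz hFdiff hpos hx
        have hare : 0 < a.re := hpos _ hmem
        have hreab : |(a.re * b.re + a.im * b.im)| ≤ ‖a‖ * ‖b‖ := by
          have h1 : ((starRingEnd ℂ) a * b).re = a.re * b.re + a.im * b.im := by
            simp [Complex.mul_re]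
          rw [← h1]
          calc |((starRingEnd ℂ) a * b).re| ≤ ‖(starRingEnd ℂ) a * b‖ :=
                Complex.abs_re_le_norm _
            _ = ‖a‖ * ‖b‖ := by rw [norm_mul, Complex.norm_conj]
        have hA2 : ‖a‖ ^ 2 = a.re * a.re + a.im * a.im := by
          rw [Complex.sq_norm, Complex.normSq_apply]
        have hral : a.re ≤ ‖a‖ := Complex.re_le_norm a
        have hfre : (f x).re = x * a.re := by rw [hfx, Complex.re_ofReal_mul]
        have hfim : (f x).im = x * a.im := by rw [hfx, Complex.im_ofReal_mul]
        have hdre : (deriv f (x : ℂ)).re = a.re + x * b.re := by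
          rw [hd]; simp [Complex.re_ofReal_mul]
        have hdim : (deriv f (x : ℂ)).im = a.im + x * b.im := by
          rw [hd]; simp [Complex.im_ofReal_mul]
        rw [hfre, hfim, hdre, hdim]
        have hxb : x * ‖b‖ ≤ a.re := by
          rw [div_eq_mul_inv] at hsch
          calc x * ‖b‖ ≤ x * (a.re * x⁻¹) := by
                exact mul_le_mul_of_nonneg_left hsch hx.le
            _ = a.re := by field_simp
        have habsb : 0 ≤ ‖b‖ := norm_nonneg b
        have habsa : 0 ≤ ‖a‖ := norm_nonneg a
        have h5 : -(‖a‖ * ‖b‖) ≤ a.re * b.re + a.im * b.im := by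
          cases abs_le.1 hreab; assumption
        have key2 : 0 ≤ a.re * a.re + a.im * a.im + x * (a.re * b.re + a.im * b.im) := by
          nlinarith [mul_le_mul_of_nonneg_left h5 hx.le, mul_le_mul_of_nonneg_left hxb habsa,
            mul_le_mul_of_nonneg_left hral habsa]
        nlinarith [mul_nonneg hx.le key2]
    -- monotonicity of normSq ∘ f on [x₁, x₂]
    have hmono : MonotoneOn (fun y : ℝ => Complex.normSq (f y)) (Icc x₁ x₂) := by
      refine monotoneOn_of_deriv_nonneg (convex_Icc x₁ x₂) ?_ ?_ ?_
      · intro y hy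
        exact ((hkey y (lt_of_lt_of_le h₁ hy.1)).1.continuousAt).continuousWithinAt
      · intro y hy
        rw [interior_Icc] at hy
        exact ((hkey y (lt_trans h₁ hy.1)).1.differentiableAt).differentiableWithinAt
      · intro y hy
        rw [interior_Icc] at hy
        have h := hkey y (lt_trans h₁ hy.1)
        rw [h.1.deriv]
        exact h.2
    have hle : Complex.normSq (f x₁) ≤ Complex.normSq (f x₂) :=
      hmono ⟨le_refl _, h₁₂⟩ ⟨h₁₂, le_refl _⟩ h₁₂
    rw [Complex.norm_def, Complex.norm_def]
    exact Real.sqrt_le_sqrt hle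
end

section
/- Let f be a Rogers function and r > 0. Then for every ξ with Re ξ > 0: (1/√2)·(|ξ|²/(r²+|ξ|²))·(Re ξ/|ξ|)·|f(r)| ≤ |f(ξ)| ≤ √2·((r²+|ξ|²)/r²)·(|ξ|/Re ξ)·|f(r)|. -/
open Metric Complex Filter

private lemma aux_abs_lt (z a : ℂ) (hz : 0 < z.re) (ha : 0 < a.re) :
    ‖z - a‖ < ‖z + starRingEnd ℂ a‖ := by
  have h : Complex.normSq (z - a) < Complex.normSq (z + starRingEnd ℂ a) := by
    simp only [Complex.normSq_apply, Complex.sub_re, Complex.sub_im, Complex.add_re,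
      Complex.add_im, Complex.conj_re, Complex.conj_im]
    nlinarith [mul_pos hz ha]
  have h2 := Real.sqrt_lt_sqrt (Complex.normSq_nonneg _) h
  simpa [Complex.norm_def] using h2

private lemma aux_ne (z a : ℂ) (hz : 0 < z.re) (ha : 0 < a.re) : z + starRingEnd ℂ a ≠ 0 := by
  intro h
  have := congrArg Complex.re h
  simp [Complex.conj_re] at this
  linarith

private lemma aux_mobius_lt (z a : ℂ) (hz : 0 < z.re) (ha : 0 < a.re) :
    ‖(z - a) / (z + starRingEnd ℂ a)‖ < 1 := by
  rw [norm_div, div_lt_one (norm_pos_iff.mpr (aux_ne z a hz ha))]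
  exact aux_abs_lt z a hz ha

private lemma schwarz_pick {g : ℂ → ℂ} (hd : DifferentiableOn ℂ g {z : ℂ | 0 < z.re})
    (hre : ∀ z : ℂ, 0 < z.re → 0 < (g z).re) {r : ℝ} (hr : 0 < r) {ξ : ℂ} (hξ : 0 < ξ.re) :
    ‖g ξ - g r‖ * ‖ξ + r‖ ≤
      ‖ξ - r‖ * ‖g ξ + starRingEnd ℂ (g r)‖ := by
  set a : ℂ := g r with ha_def
  have hrre : (0:ℝ) < (r : ℂ).re := by simpa using hr
  have hare : 0 < a.re := hre r hrre
  set φ : ℂ → ℂ := fun w => (r * (1 + w)) / (1 - w) with hφ_def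
  set F : ℂ → ℂ := fun w => (g (φ w) - a) / (g (φ w) + starRingEnd ℂ a) with hF_def
  have hsub : ∀ w ∈ ball (0:ℂ) 1, (1:ℂ) - w ≠ 0 := by
    intro w hw h
    have : w = 1 := by linear_combination -h
    rw [this] at hw
    simp at hw
  have hφre : ∀ w ∈ ball (0:ℂ) 1, 0 < (φ w).re := by
    intro w hw
    have hw1 : ‖w‖ < 1 := by simpa [mem_ball_zero_iff] using hw
    have hns : w.re * w.re + w.im * w.im < 1 := by
      have h1 : Complex.normSq w < 1 := by
        rw [← Complex.sq_norm]; nlinarith [norm_nonneg w]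
      simpa [Complex.normSq_apply] using h1
    have hD : 0 < Complex.normSq (1 - w) := by
      rw [Complex.normSq_pos]; exact hsub w hw
    have : (φ w).re = (r * (1 - (w.re * w.re + w.im * w.im))) / Complex.normSq (1 - w) := by
      simp only [hφ_def, Complex.div_re, Complex.mul_re, Complex.mul_im, Complex.add_re,
        Complex.add_im, Complex.sub_re, Complex.sub_im, Complex.one_re, Complex.one_im,
        Complex.ofReal_re, Complex.ofReal_im, Complex.normSq_apply]
      ring
    rw [this]
    exact div_pos (by nlinarith) hD
  have hφmaps : Set.MapsTo φ (ball (0:ℂ) 1) {z : ℂ | 0 < z.re} := fun w hw => hφre w hw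
  have hφdiff : DifferentiableOn ℂ φ (ball (0:ℂ) 1) := by
    apply DifferentiableOn.div
    · exact (differentiable_const _ |>.mul
        (differentiable_const _ |>.add differentiable_id)).differentiableOn
    · exact (differentiable_const _ |>.sub differentiable_id).differentiableOn
    · exact hsub
  have hcomp : DifferentiableOn ℂ (fun w => g (φ w)) (ball (0:ℂ) 1) := hd.comp hφdiff hφmaps
  have hgden : ∀ w ∈ ball (0:ℂ) 1, g (φ w) + starRingEnd ℂ a ≠ 0 := fun w hw =>
    aux_ne _ _ (hre _ (hφre w hw)) hare
  have hFdiff : DifferentiableOn ℂ F (ball (0:ℂ) 1) :=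
    (hcomp.sub (differentiableOn_const _)).div (hcomp.add (differentiableOn_const _)) hgden
  have hφ0 : φ 0 = (r : ℂ) := by simp [hφ_def]
  have hF0 : F 0 = 0 := by simp [hF_def, hφ0, ← ha_def]
  have hFmaps : Set.MapsTo F (ball (0:ℂ) 1) (ball (0:ℂ) 1) := by
    intro w hw
    rw [mem_ball_zero_iff]
    exact aux_mobius_lt _ _ (hre _ (hφre w hw)) hare
  set w₀ : ℂ := (ξ - r) / (ξ + r) with hw₀_def
  have hξr : ξ + (r:ℂ) ≠ 0 := by
    have := aux_ne ξ r hξ hrre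
    simpa [Complex.conj_ofReal] using this
  have hw₀ : ‖w₀‖ < 1 := by
    have := aux_mobius_lt ξ r hξ hrre
    simpa [Complex.conj_ofReal, hw₀_def] using this
  have hr0 : (r : ℂ) ≠ 0 := by exact_mod_cast hr.ne'
  have h1 : (1:ℂ) + w₀ = 2 * ξ / (ξ + r) := by
    rw [hw₀_def]; field_simp; ring
  have h2 : (1:ℂ) - w₀ = 2 * r / (ξ + r) := by
    rw [hw₀_def]; field_simp; ring
  have hφw₀ : φ w₀ = ξ := by
    rw [hφ_def]; simp only [h1, h2]
    field_simp
  have key := Complex.norm_le_norm_of_mapsTo_ball hFdiff (hFmaps.mono_right ball_subset_closedBall) hF0 hw₀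
  rw [hF_def] at key
  simp only [hφw₀] at key
  rw [hw₀_def, norm_div, norm_div] at key
  rw [div_le_div_iff₀ (norm_pos_iff.mpr (aux_ne _ _ (hre ξ hξ) hare))
    (norm_pos_iff.mpr hξr)] at key
  linarith [key]

private lemma schwarz_pick' {g : ℂ → ℂ} (hd : DifferentiableOn ℂ g {z : ℂ | 0 < z.re})
    (hre : ∀ z : ℂ, 0 < z.re → 0 ≤ (g z).re) {r : ℝ} (hr : 0 < r) {ξ : ℂ} (hξ : 0 < ξ.re) :
    ‖g ξ - g r‖ * ‖ξ + r‖ ≤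
      ‖ξ - r‖ * ‖g ξ + starRingEnd ℂ (g r)‖ := by
  have hev : ∀ ε : ℝ, 0 < ε →
      ‖g ξ - g r‖ * ‖ξ + r‖ ≤
        ‖ξ - r‖ * ‖g ξ + starRingEnd ℂ (g r) + 2 * ε‖ := by
    intro ε hε
    have hd' : DifferentiableOn ℂ (fun z => g z + (ε:ℂ)) {z : ℂ | 0 < z.re} :=
      hd.add (differentiableOn_const _)
    have hre' : ∀ z : ℂ, 0 < z.re → 0 < ((fun z => g z + (ε:ℂ)) z).re := by
      intro z hz
      simp only [Complex.add_re, Complex.ofReal_re]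
      linarith [hre z hz]
    have h := schwarz_pick hd' hre' hr hξ
    have e1 : (fun z => g z + (ε:ℂ)) ξ - (fun z => g z + (ε:ℂ)) ↑r = g ξ - g ↑r := by ring
    have e2 : (fun z => g z + (ε:ℂ)) ξ + starRingEnd ℂ ((fun z => g z + (ε:ℂ)) ↑r)
        = g ξ + starRingEnd ℂ (g ↑r) + 2 * ε := by
      simp only [map_add, Complex.conj_ofReal]
      ring
    rw [e1, e2] at h
    exact h
  have hT : Tendsto (fun ε : ℝ => ‖ξ - r‖ *
      ‖g ξ + starRingEnd ℂ (g r) + 2 * ε‖) (nhdsWithin 0 (Set.Ioi 0))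
      (nhds (‖ξ - r‖ * ‖g ξ + starRingEnd ℂ (g r)‖)) := by
    have hc : Continuous (fun ε : ℝ => ‖ξ - r‖ *
        ‖g ξ + starRingEnd ℂ (g r) + 2 * ε‖) := by
      apply Continuous.mul continuous_const
      exact continuous_norm.comp (continuous_const.add
        (continuous_const.mul Complex.continuous_ofReal))
    have := hc.tendsto 0
    simp only [Complex.ofReal_zero, mul_zero, add_zero] at this
    exact this.mono_left nhdsWithin_le_nhds
  refine ge_of_tendsto hT ?_
  filter_upwards [self_mem_nhdsWithin] with ε hε
  exact hev ε hε

/-- Two-sided bound comparing `|f(ξ)|` with `|f(r)|` for a Rogers function `f`. -/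
theorem stmt_8 (f : ℂ → ℂ) (hf : IsRogers f) (r : ℝ) (hr : 0 < r)
    (ξ : ℂ) (hξ : 0 < ξ.re) :
    (1 / Real.sqrt 2) * ((‖ξ‖) ^ 2 / (r ^ 2 + (‖ξ‖) ^ 2)) *
        (ξ.re / ‖ξ‖) * ‖f r‖ ≤ ‖f ξ‖ ∧
    ‖f ξ‖ ≤ Real.sqrt 2 * ((r ^ 2 + (‖ξ‖) ^ 2) / r ^ 2) *
        (‖ξ‖ / ξ.re) * ‖f r‖ := by
  obtain ⟨hdiff, hpos⟩ := hf
  have hξ0 : ξ ≠ 0 := fun h => by simp [h] at hξ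
  have hr0 : (r : ℂ) ≠ 0 := by exact_mod_cast hr.ne'
  have hgd : DifferentiableOn ℂ (fun z => f z / z) {z : ℂ | 0 < z.re} := by
    apply hdiff.div differentiableOn_id
    intro z hz h
    simp only [id_eq] at h
    rw [h] at hz
    simp at hz
  have SP := schwarz_pick' hgd (fun z hz => hpos z hz) hr hξ
  set s : ℝ := ‖ξ‖ with hs_def
  have hs : 0 < s := norm_pos_iff.mpr hξ0
  set x : ℝ := ξ.re with hx_def
  set A : ℝ := ‖ξ + r‖ with hA_def
  set B : ℝ := ‖ξ - r‖ with hB_def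
  set u : ℝ := ‖f ξ / ξ‖ with hu_def
  set v : ℝ := ‖f ↑r / ↑r‖ with hv_def
  have hu : 0 ≤ u := norm_nonneg _
  have hv : 0 ≤ v := norm_nonneg _
  have hA : 0 ≤ A := norm_nonneg _
  have hB : 0 ≤ B := norm_nonneg _
  -- triangle inequalities
  have tri1 : u ≤ v + ‖f ξ / ξ - f ↑r / ↑r‖ := by
    have h := norm_add_le (f ↑r / ↑r) (f ξ / ξ - f ↑r / ↑r)
    rw [show f ↑r / ↑r + (f ξ / ξ - f ↑r / ↑r) = f ξ / ξ by ring] at h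
    exact h
  have tri2 : v ≤ u + ‖f ξ / ξ - f ↑r / ↑r‖ := by
    have h := norm_add_le (f ξ / ξ) (f ↑r / ↑r - f ξ / ξ)
    rw [show f ξ / ξ + (f ↑r / ↑r - f ξ / ξ) = f ↑r / ↑r by ring] at h
    calc v ≤ u + ‖f ↑r / ↑r - f ξ / ξ‖ := h
    _ = u + ‖f ξ / ξ - f ↑r / ↑r‖ := by rw [← norm_neg]; ring_nf
  have tri3 : ‖f ξ / ξ + starRingEnd ℂ (f ↑r / ↑r)‖ ≤ u + v := by
    have h := norm_add_le (f ξ / ξ) (starRingEnd ℂ (f ↑r / ↑r))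
    rw [Complex.norm_conj] at h
    exact h
  have SP2 : ‖f ξ / ξ - f ↑r / ↑r‖ * A ≤ B * (u + v) :=
    SP.trans (mul_le_mul_of_nonneg_left tri3 hB)
  have harnack1 : (A - B) * u ≤ (A + B) * v := by
    nlinarith [mul_le_mul_of_nonneg_right (by linarith [tri1] :
      u - v ≤ ‖f ξ / ξ - f ↑r / ↑r‖) hA]
  have harnack2 : (A - B) * v ≤ (A + B) * u := by
    nlinarith [mul_le_mul_of_nonneg_right (by linarith [tri2] :
      v - u ≤ ‖f ξ / ξ - f ↑r / ↑r‖) hA]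
  -- geometric identities
  have hA2 : A ^ 2 = (x + r) ^ 2 + ξ.im ^ 2 := by
    rw [hA_def, Complex.sq_norm]
    simp [Complex.normSq_apply, Complex.add_re, Complex.add_im, hx_def]
    ring
  have hB2 : B ^ 2 = (x - r) ^ 2 + ξ.im ^ 2 := by
    rw [hB_def, Complex.sq_norm]
    simp [Complex.normSq_apply, Complex.sub_re, Complex.sub_im, hx_def]
    ring
  have hs2eq : s ^ 2 = x ^ 2 + ξ.im ^ 2 := by
    rw [hs_def, Complex.sq_norm]
    simp [Complex.normSq_apply, hx_def]
    ring
  have hABsq : (A + B) ^ 2 ≤ 4 * (r ^ 2 + s ^ 2) := by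
    nlinarith [sq_nonneg (A - B)]
  have hA2B2 : A ^ 2 - B ^ 2 = 4 * r * x := by rw [hA2, hB2]; ring
  have hABnn : (0:ℝ) ≤ A + B := by linarith
  have h1 : 4 * r * x * u ≤ 4 * (r ^ 2 + s ^ 2) * v := by
    calc 4 * r * x * u = (A + B) * ((A - B) * u) := by
          rw [show (A + B) * ((A - B) * u) = (A ^ 2 - B ^ 2) * u by ring, hA2B2]
      _ ≤ (A + B) * ((A + B) * v) := mul_le_mul_of_nonneg_left harnack1 hABnn
      _ = (A + B) ^ 2 * v := by ring
      _ ≤ 4 * (r ^ 2 + s ^ 2) * v := mul_le_mul_of_nonneg_right hABsq hv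
  have h2 : 4 * r * x * v ≤ 4 * (r ^ 2 + s ^ 2) * u := by
    calc 4 * r * x * v = (A + B) * ((A - B) * v) := by
          rw [show (A + B) * ((A - B) * v) = (A ^ 2 - B ^ 2) * v by ring, hA2B2]
      _ ≤ (A + B) * ((A + B) * u) := mul_le_mul_of_nonneg_left harnack2 hABnn
      _ = (A + B) ^ 2 * u := by ring
      _ ≤ 4 * (r ^ 2 + s ^ 2) * u := mul_le_mul_of_nonneg_right hABsq hu
  -- relate u, v to |f ξ|, |f r|
  have hfξ : ‖f ξ‖ = u * s := by
    rw [hu_def, norm_div, hs_def]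
    field_simp
  have hfr : ‖f ↑r‖ = v * r := by
    rw [hv_def, norm_div]
    rw [Complex.norm_real, Real.norm_eq_abs, abs_of_pos hr]
    field_simp
  have hsqrt2 : (1:ℝ) ≤ Real.sqrt 2 := by
    have h := Real.sqrt_le_sqrt (show (1:ℝ) ≤ 2 by norm_num)
    simpa using h
  have hsqrt2pos : (0:ℝ) < Real.sqrt 2 := by linarith
  have hT : (0:ℝ) < r ^ 2 + s ^ 2 := by positivity
  constructor
  · -- lower bound
    rw [hfξ, hfr]
    have e : (1 / Real.sqrt 2) * (s ^ 2 / (r ^ 2 + s ^ 2)) * (x / s) * (v * r)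
        = (s * x * v * r / (r ^ 2 + s ^ 2)) / Real.sqrt 2 := by
      field_simp
    rw [e]
    have step1 : (s * x * v * r / (r ^ 2 + s ^ 2)) / Real.sqrt 2
        ≤ s * x * v * r / (r ^ 2 + s ^ 2) := by
      apply div_le_self _ hsqrt2
      positivity
    refine step1.trans ?_
    rw [div_le_iff₀ hT]
    linarith [mul_le_mul_of_nonneg_right h2 hs.le]
  · -- upper bound
    rw [hfξ, hfr]
    have e : Real.sqrt 2 * ((r ^ 2 + s ^ 2) / r ^ 2) * (s / x) * (v * r)
        = Real.sqrt 2 * ((r ^ 2 + s ^ 2) * s * v / (r * x)) := by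
      field_simp
    rw [e]
    have step1 : u * s ≤ (r ^ 2 + s ^ 2) * s * v / (r * x) := by
      rw [le_div_iff₀ (by positivity)]
      linarith [mul_le_mul_of_nonneg_right h1 hs.le]
    refine step1.trans ?_
    exact le_mul_of_one_le_left (by positivity) hsqrt2
end

section
/- Let h be a complete Bernstein function, r > 0 and ξ ∈ ℂ ∖ (−∞, 0]. Then (1/√2)·(|ξ|/(r+|ξ|))·(Re √ξ / |√ξ|)·h(r) ≤ |h(ξ)| ≤ √2·((r+|ξ|)/r)·(|√ξ|/Re √ξ)·h(r), where √ξ denotes the principal branch of the square root. -/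
open Complex Set Metric Filter
open scoped Real Topology

noncomputable section
namespace CBFaux

variable {h : ℂ → ℂ}

/-- Reflection of a holomorphic function is holomorphic. -/
lemma hasDerivAt_conj_reflect {f : ℂ → ℂ} {z f' : ℂ}
    (hf : HasDerivAt f f' ((starRingEnd ℂ) z)) :
    HasDerivAt (fun w => (starRingEnd ℂ) (f ((starRingEnd ℂ) w))) ((starRingEnd ℂ) f') z := by
  rw [hasDerivAt_iff_tendsto_slope] at hf ⊢
  have hconj : Tendsto (starRingEnd ℂ) (𝓝[≠] z) (𝓝[≠] ((starRingEnd ℂ) z)) := by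
    rw [tendsto_nhdsWithin_iff]
    refine ⟨(Complex.continuous_conj.tendsto z).mono_left nhdsWithin_le_nhds, ?_⟩
    filter_upwards [self_mem_nhdsWithin] with w hw
    simpa using fun hc => hw ((starRingEnd ℂ).injective hc)
  have heq : (slope (fun w => (starRingEnd ℂ) (f ((starRingEnd ℂ) w))) z)
      = (starRingEnd ℂ) ∘ (slope f ((starRingEnd ℂ) z)) ∘ (starRingEnd ℂ) := by
    funext w
    simp only [slope_def_field, Function.comp_apply, map_div₀, map_sub]
    simp
  rw [heq]
  exact (Complex.continuous_conj.tendsto f').comp (hf.comp hconj)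

lemma conj_mem_slitPlane {z : ℂ} (hz : z ∈ slitPlane) : (starRingEnd ℂ) z ∈ slitPlane := by
  rcases hz with h | h
  · exact Or.inl (by simpa using h)
  · exact Or.inr (by simpa using h)

lemma reflectDiffOn {f : ℂ → ℂ} (hf : DifferentiableOn ℂ f slitPlane) :
    DifferentiableOn ℂ (fun w => (starRingEnd ℂ) (f ((starRingEnd ℂ) w))) slitPlane := by
  intro z hz
  have hz' : (starRingEnd ℂ) z ∈ slitPlane := conj_mem_slitPlane hz
  have := (hf.differentiableAt (isOpen_slitPlane.mem_nhds hz')).hasDerivAt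
  exact (hasDerivAt_conj_reflect this).differentiableAt.differentiableWithinAt

lemma isPreconnected_slitPlane : IsPreconnected slitPlane := by
  apply isPreconnected_of_forall (1 : ℂ)
  intro y hy
  exact ⟨segment ℝ 1 y, starConvex_one_slitPlane.segment_subset hy,
    left_mem_segment ℝ 1 y, right_mem_segment ℝ 1 y, (convex_segment 1 y).isPreconnected⟩

/-- Identity theorem: locally constant implies globally constant on the slit plane. -/
lemma eq_const_of_eventually (hd : DifferentiableOn ℂ h slitPlane) {ζ₀ : ℂ}
    (hζ : ζ₀ ∈ slitPlane) (hev : ∀ᶠ w in 𝓝 ζ₀, h w = h ζ₀) :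
    ∀ ξ ∈ slitPlane, h ξ = h ζ₀ := by
  intro ξ hξ
  have hA : AnalyticOnNhd ℂ h slitPlane := hd.analyticOnNhd isOpen_slitPlane
  exact hA.eqOn_of_preconnected_of_eventuallyEq (analyticOnNhd_const)
    isPreconnected_slitPlane hζ hev hξ

/-- Reflection principle : `h (conj ξ) = conj (h ξ)`. -/
lemma reflect_eq (hd : DifferentiableOn ℂ h slitPlane)
    (hpos : ∀ x : ℝ, 0 < x → (h x).im = 0 ∧ 0 ≤ (h x).re) :
    ∀ ξ ∈ slitPlane, h ((starRingEnd ℂ) ξ) = (starRingEnd ℂ) (h ξ) := by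
  have hA : AnalyticOnNhd ℂ h slitPlane := hd.analyticOnNhd isOpen_slitPlane
  have hg : AnalyticOnNhd ℂ (fun w => (starRingEnd ℂ) (h ((starRingEnd ℂ) w))) slitPlane :=
    (reflectDiffOn hd).analyticOnNhd isOpen_slitPlane
  have hfreq : ∃ᶠ w in 𝓝[≠] (1 : ℂ),
      (fun w => (starRingEnd ℂ) (h ((starRingEnd ℂ) w))) w = h w := by
    rw [Filter.frequently_iff]
    intro U hU
    rcases Metric.mem_nhdsWithin_iff.1 hU with ⟨ε, hε, hsub⟩
    set t : ℝ := 1 + min ε 1 / 2 with ht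
    have htpos : (0 : ℝ) < t := by positivity
    have htne : (t : ℂ) ≠ 1 := by
      simp only [ne_eq, Complex.ofReal_eq_one]
      have : 0 < min ε 1 / 2 := by positivity
      intro hc; rw [ht] at hc; linarith
    refine ⟨(t : ℂ), hsub ⟨?_, htne⟩, ?_⟩
    · rw [mem_ball]
      have : dist (t : ℂ) 1 = |min ε 1 / 2| := by
        rw [show (1 : ℂ) = ((1 : ℝ) : ℂ) by norm_num, Complex.isometry_ofReal.dist_eq]
        simp [ht, Real.dist_eq, abs_div]
      rw [this, abs_of_pos (by positivity)]
      have := min_le_left ε 1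
      linarith [hε]
    · have him : (h t).im = 0 := (hpos t htpos).1
      have h1 : (starRingEnd ℂ) ((t : ℂ)) = (t : ℂ) := Complex.conj_ofReal t
      simp only [h1]
      exact Complex.conj_eq_iff_im.2 him
  intro ξ hξ
  have := hg.eqOn_of_preconnected_of_frequently_eq hA isPreconnected_slitPlane
    (by simp : (1:ℂ) ∈ slitPlane) hfreq (conj_mem_slitPlane hξ)
  simp only [Complex.conj_conj] at this
  exact this.symm

/-- Open-mapping-based dichotomy. -/
lemma dichotomy (hd : DifferentiableOn ℂ h slitPlane)
    (hpos : ∀ x : ℝ, 0 < x → (h x).im = 0 ∧ 0 ≤ (h x).re)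
    (him : ∀ ξ : ℂ, 0 < ξ.im → 0 ≤ (h ξ).im) :
    (∀ ξ ∈ slitPlane, h ξ = h 1) ∨
      ((∀ x : ℝ, 0 < x → 0 < (h x).re) ∧ MapsTo h slitPlane slitPlane) := by
  have hA : AnalyticOnNhd ℂ h slitPlane := hd.analyticOnNhd isOpen_slitPlane
  -- local constancy propagates
  have Hconst : ∀ ζ₀ ∈ slitPlane, (∀ᶠ w in 𝓝 ζ₀, h w = h ζ₀) → ∀ ξ ∈ slitPlane, h ξ = h 1 := by
    intro ζ₀ hζ₀ hev ξ hξ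
    have h1 := eq_const_of_eventually hd hζ₀ hev ξ hξ
    have h2 := eq_const_of_eventually hd hζ₀ hev 1 (by simp)
    rw [h1, h2]
  -- key: upper half-plane point with real value forces constancy
  have HB : ∀ ζ₀ : ℂ, 0 < ζ₀.im → (h ζ₀).im = 0 → ∀ ξ ∈ slitPlane, h ξ = h 1 := by
    intro ζ₀ hζ₀ him0
    have hζmem : ζ₀ ∈ slitPlane := Or.inr (ne_of_gt hζ₀)
    rcases (hA ζ₀ hζmem).eventually_constant_or_nhds_le_map_nhds with hc | hmap
    · exact Hconst ζ₀ hζmem hc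
    · exfalso
      set U : Set ℂ := {z : ℂ | 0 < z.im} with hU
      have hUopen : IsOpen U := isOpen_lt continuous_const Complex.continuous_im
      have hUnhds : U ∈ 𝓝 ζ₀ := hUopen.mem_nhds hζ₀
      have himg : h '' U ∈ 𝓝 (h ζ₀) := by
        apply hmap
        rw [Filter.mem_map]
        exact Filter.mem_of_superset hUnhds (subset_preimage_image h U)
      rcases Metric.mem_nhds_iff.1 himg with ⟨δ, hδ, hball⟩
      have hmem : h ζ₀ - Complex.I * (δ/2 : ℝ) ∈ Metric.ball (h ζ₀) δ := by
        rw [mem_ball, dist_eq_norm]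
        simp only [sub_sub_cancel_left, norm_neg]
        rw [norm_mul]
        simp only [Complex.norm_I, one_mul, Complex.norm_real, Real.norm_eq_abs]
        rw [abs_of_pos (by positivity)]; linarith
      rcases hball hmem with ⟨ζ, hζU, hζeq⟩
      have : 0 ≤ (h ζ).im := him ζ hζU
      rw [hζeq] at this
      simp only [Complex.sub_im, Complex.mul_im, Complex.I_re, Complex.I_im,
        Complex.ofReal_re, Complex.ofReal_im, him0] at this
      norm_num at this
      linarith
  by_cases hB : ∃ ζ₀ : ℂ, 0 < ζ₀.im ∧ (h ζ₀).im = 0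
  · rcases hB with ⟨ζ₀, h1, h2⟩
    exact Or.inl (HB ζ₀ h1 h2)
  push_neg at hB
  have himpos : ∀ ζ : ℂ, 0 < ζ.im → 0 < (h ζ).im := by
    intro ζ hζ
    rcases lt_or_eq_of_le (him ζ hζ) with h | h
    · exact h
    · exact absurd h.symm (hB ζ hζ)
  by_cases hC : ∃ x : ℝ, 0 < x ∧ h x = 0
  · rcases hC with ⟨x, hx, hx0⟩
    have hxmem : (x : ℂ) ∈ slitPlane := by simpa using hx
    rcases (hA x hxmem).eventually_constant_or_nhds_le_map_nhds with hc | hmap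
    · left
      apply Hconst x hxmem
      filter_upwards [hc] with w hw using hw
    · exfalso
      have himg : h '' slitPlane ∈ 𝓝 (h x) := by
        apply hmap
        rw [Filter.mem_map]
        exact Filter.mem_of_superset (isOpen_slitPlane.mem_nhds hxmem)
          (subset_preimage_image h slitPlane)
      rw [hx0] at himg
      rcases Metric.mem_nhds_iff.1 himg with ⟨δ, hδ, hball⟩
      have hmem : (-(δ/2 : ℝ) : ℂ) ∈ Metric.ball (0 : ℂ) δ := by
        rw [mem_ball, dist_zero_right]
        simp only [Complex.norm_real, Real.norm_eq_abs, norm_neg]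
        rw [abs_of_pos (by positivity)]; linarith
      rcases hball hmem with ⟨ζ, hζmem, hζeq⟩
      rcases lt_trichotomy ζ.im 0 with hlt | heq | hgt
      · -- lower half-plane: reflect
        have hconjmem : (starRingEnd ℂ) ζ ∈ slitPlane := conj_mem_slitPlane hζmem
        have : 0 < ((starRingEnd ℂ) ζ).im := by simpa using hlt
        have h2 : (h ((starRingEnd ℂ) ζ)).im = 0 := by
          rw [reflect_eq hd hpos ζ hζmem, hζeq, ← Complex.ofReal_neg, Complex.conj_ofReal]
          simp
        exact absurd h2 (ne_of_gt (himpos _ this))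
      · -- real: contradiction with nonnegativity
        have hre : 0 < ζ.re := by
          rcases hζmem with hm | hm
          · exact hm
          · exact absurd heq hm
        have : ζ = ((ζ.re : ℝ) : ℂ) := Complex.ext rfl (by simp [heq])
        have h3 := (hpos ζ.re hre).2
        rw [← this, hζeq] at h3
        simp only [Complex.neg_re, Complex.ofReal_re] at h3
        linarith
      · exact absurd (by rw [hζeq]; simp : (h ζ).im = 0) (ne_of_gt (himpos ζ hgt))
  push_neg at hC
  right
  have hxpos : ∀ x : ℝ, 0 < x → 0 < (h x).re := by
    intro x hx
    rcases lt_or_eq_of_le (hpos x hx).2 with h | h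
    · exact h
    · exfalso
      exact hC x hx (Complex.ext (by simp [← h]) (by simp [(hpos x hx).1]))
  refine ⟨hxpos, ?_⟩
  intro ζ hζ
  rcases lt_trichotomy ζ.im 0 with hlt | heq | hgt
  · right
    have hconjmem : (starRingEnd ℂ) ζ ∈ slitPlane := conj_mem_slitPlane hζ
    have h1 : 0 < ((starRingEnd ℂ) ζ).im := by simpa using hlt
    have := himpos _ h1
    rw [reflect_eq hd hpos ζ hζ] at this
    simp only [Complex.conj_im] at this
    linarith
  · left
    have hre : 0 < ζ.re := by
      rcases hζ with hm | hm
      · exact hm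
      · exact absurd heq hm
    have hζeq : ζ = ((ζ.re : ℝ) : ℂ) := Complex.ext rfl (by simp [heq])
    rw [hζeq]; exact hxpos ζ.re hre
  · exact Or.inr (ne_of_gt (himpos ζ hgt))

lemma exp_mem_slitPlane {w : ℂ} (h1 : -π < w.im) (h2 : w.im < π) :
    Complex.exp w ∈ slitPlane := by
  rcases lt_trichotomy w.im 0 with hlt | heq | hgt
  · exact Or.inr (by
      rw [Complex.exp_im]
      exact mul_ne_zero (ne_of_gt (Real.exp_pos _))
        (ne_of_lt (Real.sin_neg_of_neg_of_neg_pi_lt hlt h1)))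
  · left
    rw [Complex.exp_re, heq]
    simpa using Real.exp_pos w.re
  · exact Or.inr (by
      rw [Complex.exp_im]
      exact mul_ne_zero (ne_of_gt (Real.exp_pos _))
        (ne_of_gt (Real.sin_pos_of_pos_of_lt_pi hgt h2)))

/-- Phragmén–Lindelöf: for a nonконstant CBF, `arg (h ξ) ≤ arg ξ` on the upper half plane. -/
lemma arg_le_arg (hd : DifferentiableOn ℂ h slitPlane)
    (hppos : ∀ x : ℝ, 0 < x → (h x).im = 0 ∧ 0 < (h x).re)
    (hmaps : MapsTo h slitPlane slitPlane)
    {ξ : ℂ} (hξ : 0 < ξ.im) : Complex.arg (h ξ) ≤ Complex.arg ξ := by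
  have hξne : ξ ≠ 0 := fun hc => by simp [hc] at hξ
  have hargpos : 0 < Complex.arg ξ := by
    rcases lt_or_eq_of_le (Complex.arg_nonneg_iff.2 hξ.le) with hlt | heq
    · exact hlt
    · exfalso
      have := Complex.arg_eq_zero_iff.1 heq.symm
      exact (ne_of_gt hξ) this.2
  have hargltpi : Complex.arg ξ < π :=
    lt_of_le_of_ne (Complex.arg_le_pi ξ) (by
      intro hc
      exact absurd (Complex.arg_eq_pi_iff.1 hc).2 (by simp [ne_of_gt hξ]))
  have key : ∀ ε : ℝ, 0 < ε → Complex.arg (h ξ) ≤ Complex.arg ξ + ε := by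
    intro ε hε
    rcases lt_or_ge (π - Complex.arg ξ) ε with htriv | hok
    · linarith [Complex.arg_le_pi (h ξ)]
    -- main case: `arg ξ ≤ b := π - ε`, `0 < b < π`
    set b : ℝ := π - ε with hb
    have hb0 : 0 < b := by simp only [hb]; linarith
    have hbpi : b < π := by simp only [hb]; linarith
    set F : ℂ → ℂ := fun w =>
      Complex.exp (Complex.I * w - Complex.I * Complex.log (h (Complex.exp w))) with hF
    have hnorm : ∀ w : ℂ, h (Complex.exp w) ≠ 0 →
        ‖F w‖ = Real.exp (Complex.arg (h (Complex.exp w)) - w.im) := by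
      intro w hw
      rw [hF]
      simp only [Complex.norm_exp]
      congr 1
      simp [Complex.sub_re, Complex.mul_re, Complex.I_re, Complex.I_im, Complex.log_im]
      ring
    -- differentiability on an open strip containing the closure
    set T : Set ℂ := Complex.im ⁻¹' (Ioo (-1) π) with hT
    have hTopen : IsOpen T := isOpen_Ioo.preimage Complex.continuous_im
    have hmemT : ∀ w ∈ T, Complex.exp w ∈ slitPlane := by
      intro w hw
      exact exp_mem_slitPlane (by have := hw.1; simp at this ⊢; nlinarith [Real.pi_gt_three]) hw.2
    have hdiffT : DifferentiableOn ℂ F T := by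
      intro w hw
      have h1 : Complex.exp w ∈ slitPlane := hmemT w hw
      have h2 : h (Complex.exp w) ∈ slitPlane := hmaps h1
      have d1 : DifferentiableAt ℂ (fun w => h (Complex.exp w)) w :=
        (hd.differentiableAt (isOpen_slitPlane.mem_nhds h1)).comp w
          Complex.differentiable_exp.differentiableAt
      have d2 : DifferentiableAt ℂ (fun w => Complex.log (h (Complex.exp w))) w :=
        d1.clog h2
      exact (((differentiableAt_fun_id.const_mul Complex.I).sub
        (d2.const_mul Complex.I)).cexp).differentiableWithinAt
    have hclos : closure (Complex.im ⁻¹' (Ioo 0 b)) ⊆ T := by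
      have step1 : closure (Complex.im ⁻¹' (Ioo 0 b)) ⊆ Complex.im ⁻¹' (Icc 0 b) :=
        closure_minimal (fun w hw => ⟨le_of_lt hw.1, le_of_lt hw.2⟩)
          (IsClosed.preimage Complex.continuous_im isClosed_Icc)
      refine step1.trans ?_
      intro w hw
      exact ⟨lt_of_lt_of_le (by norm_num) hw.1, lt_of_le_of_lt hw.2 hbpi⟩
    have hfd : DiffContOnCl ℂ F (Complex.im ⁻¹' (Ioo 0 b)) :=
      ⟨hdiffT.mono (fun w hw => hclos (subset_closure hw)),
        (hdiffT.continuousOn).mono hclos⟩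
    have hC1 : (1 : ℝ) ≤ Real.exp ε := by
      rw [show (1:ℝ) = Real.exp 0 by simp]
      exact Real.exp_le_exp.2 hε.le
    -- boundary bounds
    have hle_a : ∀ w : ℂ, w.im = 0 → ‖F w‖ ≤ Real.exp ε := by
      intro w hw
      have hwre : w = ((w.re : ℝ) : ℂ) := Complex.ext rfl (by simp [hw])
      have hexp : Complex.exp w = ((Real.exp w.re : ℝ) : ℂ) := by
        nth_rewrite 1 [hwre]
        exact (Complex.ofReal_exp w.re).symm
      have hpos' := hppos (Real.exp w.re) (Real.exp_pos _)
      have hhne : h (Complex.exp w) ≠ 0 := by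
        rw [hexp]
        intro hc
        rw [hc] at hpos'
        simp at hpos'
      rw [hnorm w hhne, hexp]
      have harg : Complex.arg (h ((Real.exp w.re : ℝ) : ℂ)) = 0 :=
        Complex.arg_eq_zero_iff.2 ⟨hpos'.2.le, hpos'.1⟩
      rw [harg, hw]
      simpa using hC1
    have hle_b : ∀ w : ℂ, w.im = b → ‖F w‖ ≤ Real.exp ε := by
      intro w hw
      have h1 : Complex.exp w ∈ slitPlane :=
        exp_mem_slitPlane (by rw [hw]; linarith) (by rw [hw]; exact hbpi)
      have hhne : h (Complex.exp w) ≠ 0 := Complex.slitPlane_ne_zero (hmaps h1)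
      rw [hnorm w hhne, hw]
      apply Real.exp_le_exp.2
      have := Complex.arg_le_pi (h (Complex.exp w))
      simp only [hb]; linarith
    -- apply PL
    have happ : ‖F (Complex.log ξ)‖ ≤ Real.exp ε := by
      apply PhragmenLindelof.horizontal_strip (a := 0) (b := b) hfd ?_ hle_a hle_b
        (by rw [Complex.log_im]; exact hargpos.le)
        (by rw [Complex.log_im]; simpa only [hb] using by linarith)
      refine ⟨0, by rw [sub_zero]; positivity, π, ?_⟩
      rw [Asymptotics.isBigO_iff]
      refine ⟨1, ?_⟩
      rw [Filter.eventually_inf_principal]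
      apply Filter.Eventually.of_forall
      intro w hw
      have h1 : Complex.exp w ∈ slitPlane :=
        exp_mem_slitPlane (by nlinarith [hw.1, Real.pi_gt_three])
          (lt_trans hw.2 hbpi)
      have hhne : h (Complex.exp w) ≠ 0 := Complex.slitPlane_ne_zero (hmaps h1)
      rw [hnorm w hhne]
      simp only [zero_mul, Real.exp_zero, mul_one, one_mul, Real.norm_eq_abs,
        Real.abs_exp]
      apply Real.exp_le_exp.2
      linarith [Complex.arg_le_pi (h (Complex.exp w)), hw.1]
    -- unravel
    have hexplog : Complex.exp (Complex.log ξ) = ξ := Complex.exp_log hξne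
    have hhne : h ξ ≠ 0 := Complex.slitPlane_ne_zero (hmaps (Or.inr (ne_of_gt hξ)))
    rw [hnorm (Complex.log ξ) (by rw [hexplog]; exact hhne)] at happ
    rw [hexplog, Complex.log_im] at happ
    have := Real.exp_le_exp.1 happ
    linarith
  exact le_of_forall_pos_le_add key

/-- basic facts about the principal square root via `cpow`. -/
lemma sq_half_facts {ξ : ℂ} (hξ : ξ ∈ slitPlane) :
    (ξ ^ ((1:ℂ)/2)) * (ξ ^ ((1:ℂ)/2)) = ξ ∧ 0 < (ξ ^ ((1:ℂ)/2)).re := by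
  have hne : ξ ≠ 0 := Complex.slitPlane_ne_zero hξ
  constructor
  · rw [← Complex.cpow_add _ _ hne]
    norm_num
  · rw [Complex.cpow_def_of_ne_zero hne, Complex.exp_re]
    apply mul_pos (Real.exp_pos _)
    apply Real.cos_pos_of_mem_Ioo
    have him : (Complex.log ξ * ((1:ℂ)/2)).im = Complex.arg ξ / 2 := by
      have : ((1:ℂ)/2) = (((1:ℝ)/2 : ℝ) : ℂ) := by norm_num
      rw [this, Complex.mul_im]
      simp [Complex.log_im]
      ring
    rw [him]
    constructor
    · have := Complex.neg_pi_lt_arg ξ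
      linarith
    · have h1 := Complex.arg_le_pi ξ
      have h2 := Complex.slitPlane_arg_ne_pi hξ
      have : Complex.arg ξ < π := lt_of_le_of_ne h1 h2
      linarith

lemma re_mul_conj (u v : ℂ) :
    (u * (starRingEnd ℂ) v).re =
      ‖u‖ * ‖v‖ * Real.cos (Complex.arg u - Complex.arg v) := by
  nth_rewrite 1 [← Complex.norm_mul_exp_arg_mul_I u, ← Complex.norm_mul_exp_arg_mul_I v]
  rw [map_mul, ← Complex.exp_conj]
  have hconj : (starRingEnd ℂ) ((Complex.arg v : ℂ) * Complex.I) =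
      -((Complex.arg v : ℂ) * Complex.I) := by
    simp [Complex.conj_ofReal]
  rw [hconj, Complex.conj_ofReal]
  have e1 : Complex.exp ((Complex.arg u : ℂ) * Complex.I) *
      Complex.exp (-((Complex.arg v : ℂ) * Complex.I)) =
      Complex.exp (((Complex.arg u - Complex.arg v : ℝ) : ℂ) * Complex.I) := by
    rw [← Complex.exp_add]
    congr 1
    push_cast
    ring
  have e0 : ((‖u‖ : ℂ) * Complex.exp ((Complex.arg u : ℂ) * Complex.I)) *
      ((‖v‖ : ℂ) * Complex.exp (-((Complex.arg v : ℂ) * Complex.I))) =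
      ((‖u‖ * ‖v‖ : ℝ) : ℂ) *
        (Complex.exp ((Complex.arg u : ℂ) * Complex.I) *
          Complex.exp (-((Complex.arg v : ℂ) * Complex.I))) := by
    push_cast
    ring
  rw [e0, e1, Complex.re_ofReal_mul, Complex.exp_ofReal_mul_I_re]

/-- The Rogers property: `Re (h(z²) conj z) > 0` on the right half-plane. -/
lemma rogers (hd : DifferentiableOn ℂ h slitPlane)
    (hpos : ∀ x : ℝ, 0 < x → (h x).im = 0 ∧ 0 ≤ (h x).re)
    (him : ∀ ξ : ℂ, 0 < ξ.im → 0 ≤ (h ξ).im)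
    (hppos : ∀ x : ℝ, 0 < x → (h x).im = 0 ∧ 0 < (h x).re)
    (hmaps : MapsTo h slitPlane slitPlane)
    {z : ℂ} (hz : 0 < z.re) : 0 < (h (z * z) * (starRingEnd ℂ) z).re := by
  have hzne : z ≠ 0 := fun hc => by simp [hc] at hz
  have hθ : |Complex.arg z| < π / 2 := Complex.abs_arg_lt_pi_div_two_iff.2 (Or.inl hz)
  have hzz : z * z ∈ slitPlane := by
    rcases eq_or_ne z.im 0 with h0 | h0
    · left
      have : (z * z).re = z.re * z.re - z.im * z.im := by simp [Complex.mul_re]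
      rw [this, h0]
      nlinarith
    · right
      have : (z * z).im = 2 * (z.re * z.im) := by simp [Complex.mul_im]; ring
      rw [this]
      simp [h0, ne_of_gt hz]
  have hhmem : h (z * z) ∈ slitPlane := hmaps hzz
  have hhne : h (z * z) ≠ 0 := Complex.slitPlane_ne_zero hhmem
  rw [re_mul_conj]
  apply mul_pos (mul_pos (norm_pos_iff.mpr hhne) (norm_pos_iff.mpr hzne))
  apply Real.cos_pos_of_mem_Ioo
  -- bound |arg (h (z*z)) - arg z| < π/2 by case analysis on the sign of im z
  rcases lt_trichotomy z.im 0 with hlt | heq | hgt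
  · -- lower half-plane: reflect
    have hconjz : ((starRingEnd ℂ) z).re = z.re := by simp
    have hargnepi : Complex.arg z ≠ π := by
      intro hc
      rw [hc, abs_of_pos Real.pi_pos] at hθ
      linarith [Real.pi_pos]
    have hargconjz : Complex.arg ((starRingEnd ℂ) z) = -Complex.arg z := by
      rw [Complex.arg_conj, if_neg hargnepi]
    have hconjzz : (starRingEnd ℂ) (z * z) = ((starRingEnd ℂ) z) * ((starRingEnd ℂ) z) := by
      rw [map_mul]
    have hupper : 0 < ((starRingEnd ℂ) (z * z)).im := by
      simp only [Complex.conj_im]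
      have : (z * z).im = 2 * (z.re * z.im) := by simp [Complex.mul_im]; ring
      rw [this]
      nlinarith
    have hconjmem : (starRingEnd ℂ) (z * z) ∈ slitPlane := Or.inr (ne_of_gt hupper)
    -- arg of conj (z*z) = -arg(z*z) = 2 * arg(conj z)
    have hargmul : Complex.arg ((starRingEnd ℂ) (z * z)) =
        Complex.arg ((starRingEnd ℂ) z) + Complex.arg ((starRingEnd ℂ) z) := by
      rw [hconjzz]
      apply Complex.arg_mul (by simpa using hzne) (by simpa using hzne)
      rw [hargconjz]
      constructor
      · nlinarith [abs_lt.1 hθ]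
      · nlinarith [abs_lt.1 hθ]
    have harg1 : 0 ≤ Complex.arg (h ((starRingEnd ℂ) (z * z))) :=
      Complex.arg_nonneg_iff.2 (him _ hupper)
    have harg2 : Complex.arg (h ((starRingEnd ℂ) (z * z))) ≤
        Complex.arg ((starRingEnd ℂ) (z * z)) := arg_le_arg hd hppos hmaps hupper
    have hrefl : h (z * z) = (starRingEnd ℂ) (h ((starRingEnd ℂ) (z * z))) := by
      have := reflect_eq hd hpos ((starRingEnd ℂ) (z * z)) hconjmem
      rw [Complex.conj_conj] at this
      exact this
    have hargh : Complex.arg (h (z * z)) = -Complex.arg (h ((starRingEnd ℂ) (z * z))) := by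
      rw [hrefl, Complex.arg_conj, if_neg (Complex.slitPlane_arg_ne_pi (hmaps hconjmem))]
    rw [hargh]
    rw [hargmul, hargconjz] at harg2
    constructor <;> nlinarith [abs_lt.1 hθ]
  · -- real positive
    have hzeq : z = ((z.re : ℝ) : ℂ) := Complex.ext rfl (by simp [heq])
    have hargz : Complex.arg z = 0 := by
      rw [hzeq, Complex.arg_ofReal_of_nonneg hz.le]
    have hzz' : z * z = (((z.re * z.re : ℝ)) : ℂ) := by
      apply Complex.ext <;> simp [Complex.mul_re, Complex.mul_im, heq]
    have hargh : Complex.arg (h (z * z)) = 0 := by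
      rw [hzz']
      exact Complex.arg_eq_zero_iff.2
        ⟨(hppos _ (by nlinarith)).2.le, (hppos _ (by nlinarith)).1⟩
    rw [hargz, hargh, sub_zero]
    constructor <;> nlinarith [Real.pi_pos]
  · -- upper half-plane
    have hupper : 0 < (z * z).im := by
      have : (z * z).im = 2 * (z.re * z.im) := by simp [Complex.mul_im]; ring
      rw [this]; nlinarith
    have hargmul : Complex.arg (z * z) = Complex.arg z + Complex.arg z := by
      apply Complex.arg_mul hzne hzne
      constructor
      · nlinarith [abs_lt.1 hθ]
      · nlinarith [abs_lt.1 hθ]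
    have harg1 : 0 ≤ Complex.arg (h (z * z)) := Complex.arg_nonneg_iff.2 (him _ hupper)
    have harg2 : Complex.arg (h (z * z)) ≤ Complex.arg (z * z) := arg_le_arg hd hppos hmaps hupper
    rw [hargmul] at harg2
    constructor <;> nlinarith [abs_lt.1 hθ]

lemma sq_mem_slitPlane {z : ℂ} (hz : 0 < z.re) : z * z ∈ slitPlane := by
  rcases eq_or_ne z.im 0 with h0 | h0
  · left
    have : (z * z).re = z.re * z.re - z.im * z.im := by simp [Complex.mul_re]
    rw [this, h0]; nlinarith
  · right
    have : (z * z).im = 2 * (z.re * z.im) := by simp [Complex.mul_im]; ring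
    rw [this]; simp [h0, ne_of_gt hz]

lemma re_div_eq (p q : ℂ) : (p / q).re = (p * (starRingEnd ℂ) q).re / Complex.normSq q := by
  rcases eq_or_ne q 0 with rfl | hq
  · simp
  · rw [div_eq_mul_inv, Complex.inv_def, ← mul_assoc,
      mul_comm (p * (starRingEnd ℂ) q) _, Complex.re_ofReal_mul, div_eq_inv_mul]

lemma abs_sub_lt_abs_add {v : ℂ} {a : ℝ} (ha : 0 < a) (hv : 0 < v.re) :
    ‖v - (a : ℂ)‖ < ‖v + (a : ℂ)‖ := by
  have hre : (v * (starRingEnd ℂ) ((a:ℝ):ℂ)).re = v.re * a := by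
    rw [Complex.conj_ofReal, mul_comm, Complex.re_ofReal_mul]; ring
  have h1 : Complex.normSq (v - (a:ℂ)) < Complex.normSq (v + (a:ℂ)) := by
    rw [Complex.normSq_add, Complex.normSq_sub, hre]
    nlinarith
  rw [Complex.norm_def, Complex.norm_def]
  exact Real.sqrt_lt_sqrt (Complex.normSq_nonneg _) h1

/-- Schwarz–Pick / Harnack core inequality. -/
lemma schwarz_pick_core
    (hd : DifferentiableOn ℂ h slitPlane)
    (hpos : ∀ x : ℝ, 0 < x → (h x).im = 0 ∧ 0 ≤ (h x).re)
    (him : ∀ ξ : ℂ, 0 < ξ.im → 0 ≤ (h ξ).im)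
    (hxpos : ∀ x : ℝ, 0 < x → 0 < (h x).re)
    (hmaps : MapsTo h slitPlane slitPlane)
    {z : ℂ} (hz : 0 < z.re) {W : ℝ} (hW : 0 < W) {A : ℝ} (hA0 : 0 < A)
    (hFW : h ((W:ℂ) * (W:ℂ)) * ((W:ℂ))⁻¹ = (A : ℂ)) :
    ‖h (z*z) * z⁻¹ - (A:ℂ)‖ ≤
      (‖z - (W:ℂ)‖ / ‖z + (W:ℂ)‖) *
        ‖h (z*z) * z⁻¹ + (A:ℂ)‖ := by
  have hppos : ∀ x : ℝ, 0 < x → (h x).im = 0 ∧ 0 < (h x).re :=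
    fun x hx => ⟨(hpos x hx).1, hxpos x hx⟩
  set F : ℂ → ℂ := fun v => h (v * v) * v⁻¹ with hF
  have hFre : ∀ v : ℂ, 0 < v.re → 0 < (F v).re := by
    intro v hv
    have hvne : v ≠ 0 := fun hc => by simp [hc] at hv
    have hrog := rogers hd hpos him hppos hmaps hv
    have : F v = (h (v*v) * (starRingEnd ℂ) v) * (((Complex.normSq v)⁻¹ : ℝ) : ℂ) := by
      rw [hF]
      simp only
      rw [Complex.inv_def, ← mul_assoc]
    rw [this, mul_comm, Complex.re_ofReal_mul]
    have : 0 < (Complex.normSq v)⁻¹ := inv_pos.2 (Complex.normSq_pos.2 hvne)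
    positivity
  set C : ℂ → ℂ := fun u => ((W:ℂ) + (W:ℂ) * u) / (1 - u) with hC
  have hCmem : ∀ u ∈ Metric.ball (0:ℂ) 1, 0 < (C u).re := by
    intro u hu
    rw [mem_ball_zero_iff] at hu
    have hu1 : (1:ℂ) - u ≠ 0 := by
      intro hc
      have : u = 1 := by linear_combination -hc
      rw [this] at hu
      simp at hu
    have hnum : (((W:ℂ) + (W:ℂ) * u) * (starRingEnd ℂ) (1 - u)).re
        = W * (1 - Complex.normSq u) := by
      have e : ((W:ℂ) + (W:ℂ) * u) * (starRingEnd ℂ) (1 - u)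
          = (W:ℂ) * (1 + u - (starRingEnd ℂ) u - u * (starRingEnd ℂ) u) := by
        rw [map_sub, map_one]; ring
      rw [e, Complex.mul_conj, Complex.re_ofReal_mul]
      simp [Complex.add_re, Complex.sub_re, Complex.conj_re]
    rw [hC]
    simp only
    rw [re_div_eq, hnum]
    have hu'' : ‖u‖ < 1 := hu
    have h2 : Complex.normSq u < 1 := by
      rw [Complex.normSq_eq_norm_sq]
      nlinarith [norm_nonneg u]
    have h3 : 0 < Complex.normSq (1 - u) := Complex.normSq_pos.2 hu1
    exact div_pos (mul_pos hW (by linarith)) h3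
  have hCne : ∀ u ∈ Metric.ball (0:ℂ) 1, C u ≠ 0 :=
    fun u hu hc => by simpa [hc] using hCmem u hu
  set G : ℂ → ℂ := fun u => (F (C u) - (A:ℂ)) / (F (C u) + (A:ℂ)) with hG
  have hdenne : ∀ u ∈ Metric.ball (0:ℂ) 1, F (C u) + (A:ℂ) ≠ 0 := by
    intro u hu hc
    have h1 := hFre (C u) (hCmem u hu)
    have : (F (C u) + (A:ℂ)).re = (F (C u)).re + A := by simp
    rw [hc] at this
    simp at this
    linarith
  have hGdiff : DifferentiableOn ℂ G (Metric.ball (0:ℂ) 1) := by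
    intro u hu
    have hu' := hu
    rw [mem_ball_zero_iff] at hu'
    have hu1 : (1:ℂ) - u ≠ 0 := by
      intro hc
      have : u = 1 := by linear_combination -hc
      rw [this] at hu'
      simp at hu'
    have dC : DifferentiableAt ℂ C u := by
      apply DifferentiableAt.div
      · exact (differentiableAt_const _).add ((differentiableAt_const _).mul differentiableAt_id)
      · exact (differentiableAt_const _).sub differentiableAt_id
      · exact hu1
    have dCm : DifferentiableAt ℂ (fun u => C u * C u) u := dC.mul dC
    have dh : DifferentiableAt ℂ (fun u => h (C u * C u)) u := by
      have hmem : C u * C u ∈ slitPlane := sq_mem_slitPlane (hCmem u hu)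
      exact (hd.differentiableAt (isOpen_slitPlane.mem_nhds hmem)).comp u dCm
    have dFC : DifferentiableAt ℂ (fun u => F (C u)) u := by
      have dinv : DifferentiableAt ℂ (fun u => (C u)⁻¹) u := dC.inv (hCne u hu)
      exact dh.mul dinv
    apply DifferentiableAt.differentiableWithinAt
    exact ((dFC.sub (differentiableAt_const _)).div
      (dFC.add (differentiableAt_const _)) (hdenne u hu))
  have hCW : C 0 = (W:ℂ) := by rw [hC]; simp
  have hG0 : G 0 = 0 := by
    rw [hG]
    simp only
    rw [hCW, hF]
    simp only
    rw [hFW]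
    simp
  have hGmaps : MapsTo G (Metric.ball (0:ℂ) 1) (Metric.ball (G 0) 1) := by
    intro u hu
    rw [hG0, mem_ball_zero_iff, hG]
    simp only
    rw [norm_div]
    rw [div_lt_one (norm_pos_iff.mpr (hdenne u hu))]
    exact abs_sub_lt_abs_add hA0 (hFre (C u) (hCmem u hu))
  -- the point u₀
  have hzWne : z + (W:ℂ) ≠ 0 := by
    intro hc
    have : (z + (W:ℂ)).re = z.re + W := by simp
    rw [hc] at this
    simp at this
    linarith
  set u₀ : ℂ := (z - (W:ℂ)) / (z + (W:ℂ)) with hu₀def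
  have hu₀ : u₀ ∈ Metric.ball (0:ℂ) 1 := by
    rw [mem_ball_zero_iff, hu₀def, norm_div,
      div_lt_one (norm_pos_iff.mpr hzWne)]
    exact abs_sub_lt_abs_add hW hz
  have hden : (1:ℂ) - u₀ ≠ 0 := by
    have e : ((1:ℂ) - u₀) * (z + (W:ℂ)) = 2 * (W:ℂ) := by
      rw [hu₀def]
      field_simp
      ring
    intro hc
    rw [hc, zero_mul] at e
    have : (W:ℂ) ≠ 0 := Complex.ofReal_ne_zero.2 (ne_of_gt hW)
    simp [this] at e
  have hCu₀ : C u₀ = z := by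
    have hnum : (W:ℂ) + (W:ℂ) * u₀ = z * (1 - u₀) := by
      rw [hu₀def]
      field_simp
      ring
    rw [hC]
    simp only
    rw [hnum, mul_div_assoc, div_self hden, mul_one]
  have happ := Complex.dist_le_div_mul_dist_of_mapsTo_ball hGdiff (hGmaps.mono_right Metric.ball_subset_closedBall) hu₀
  rw [hG0, dist_zero_right, dist_zero_right] at happ
  have : ‖G u₀‖ ≤ ‖u₀‖ := by
    simpa using happ
  rw [hG] at this
  simp only at this
  rw [hCu₀, hu₀def, norm_div, norm_div] at this
  rw [div_le_div_iff₀ (norm_pos_iff.mpr (by rw [← hCu₀] at *; exact hdenne u₀ hu₀))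
    (norm_pos_iff.mpr hzWne)] at this
  rw [div_mul_eq_mul_div, le_div_iff₀ (norm_pos_iff.mpr hzWne)]
  rw [hF] at this
  simp only at this
  linarith [this]

end CBFaux

end




/-- A complete Bernstein function (equivalent characterisation): holomorphic on
`ℂ ∖ (−∞, 0]`, nonnegative on `(0, ∞)`, and with `Im f(ξ) ≥ 0` on the upper
half-plane. -/
def IsCBF (f : ℂ → ℂ) : Prop :=
  DifferentiableOn ℂ f {ξ : ℂ | 0 < ξ.re ∨ ξ.im ≠ 0} ∧
  (∀ x : ℝ, 0 < x → (f x).im = 0 ∧ 0 ≤ (f x).re) ∧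
  (∀ ξ : ℂ, 0 < ξ.im → 0 ≤ (f ξ).im)

set_option maxHeartbeats 1000000 in
/-- Two-sided bound for a complete Bernstein function `h` on `ℂ ∖ (−∞, 0]` in
terms of `h(r)`, `r > 0`; here `ξ^(1/2)` is the principal branch of the square
root. -/
theorem stmt_9 (h : ℂ → ℂ) (hh : IsCBF h)
    (hnz : ∃ x : ℝ, 0 < x ∧ h x ≠ 0)
    (r : ℝ) (hr : 0 < r) (ξ : ℂ) (hξ : 0 < ξ.re ∨ ξ.im ≠ 0) :
    (1 / Real.sqrt 2) * (‖ξ‖ / (r + ‖ξ‖)) *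
        ((ξ ^ ((1 : ℂ) / 2)).re / ‖ξ ^ ((1 : ℂ) / 2)‖) * (h r).re
      ≤ ‖h ξ‖ ∧
    ‖h ξ‖ ≤ Real.sqrt 2 * ((r + ‖ξ‖) / r) *
        (‖ξ ^ ((1 : ℂ) / 2)‖ / (ξ ^ ((1 : ℂ) / 2)).re) * (h r).re := by
  obtain ⟨hd, hpos, him⟩ := hh
  have hd' : DifferentiableOn ℂ h Complex.slitPlane := hd
  have hξmem : ξ ∈ Complex.slitPlane := hξ
  have hξne : ξ ≠ 0 := Complex.slitPlane_ne_zero hξmem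
  -- square root facts
  obtain ⟨hzz, hx0⟩ := CBFaux.sq_half_facts hξmem
  set z : ℂ := ξ ^ ((1:ℂ)/2) with hzdef
  set s : ℝ := ‖z‖ with hsdef
  set x : ℝ := z.re with hxdef
  have hxs : x ≤ s := Complex.re_le_norm z
  have hs0 : 0 < s := lt_of_lt_of_le hx0 hxs
  have hs2 : s^2 = ‖ξ‖ := by
    rw [hsdef, ← hzz, norm_mul]; ring
  have habsξ0 : 0 < ‖ξ‖ := norm_pos_iff.mpr hξne
  set W : ℝ := Real.sqrt r with hWdef
  have hW0 : 0 < W := Real.sqrt_pos.2 hr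
  have hW2 : W^2 = r := Real.sq_sqrt hr.le
  have hsqrt2 : (1:ℝ) ≤ Real.sqrt 2 := by
    rw [show (1:ℝ) = Real.sqrt 1 by simp]
    exact Real.sqrt_le_sqrt (by norm_num)
  have hsqrt2pos : (0:ℝ) < Real.sqrt 2 := by positivity
  rcases CBFaux.dichotomy hd' hpos him with hconst | ⟨hxpos, hmaps⟩
  · -- constant case
    set c : ℂ := h 1 with hcdef
    obtain ⟨x₀, hx₀, hne0⟩ := hnz
    have hcx : h (x₀ : ℂ) = c := hconst _ (by simpa using hx₀)
    have hcne : c ≠ 0 := by rw [← hcx]; exact hne0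
    have hc1 : c = h ((1:ℝ):ℂ) := by rw [hcdef]; norm_num
    have hcim : c.im = 0 := by rw [hc1]; exact (hpos 1 one_pos).1
    have hcre : 0 ≤ c.re := by rw [hc1]; exact (hpos 1 one_pos).2
    have hcrepos : 0 < c.re := by
      rcases lt_or_eq_of_le hcre with h1 | h1
      · exact h1
      · exact absurd (Complex.ext h1.symm hcim) hcne
    have hhξ : h ξ = c := hconst ξ hξmem
    have hhr : h ((r:ℝ):ℂ) = c := hconst _ (by simpa using hr)
    have habsc : ‖c‖ = c.re := by
      have : c = ((c.re : ℝ) : ℂ) := Complex.ext rfl (by simp [hcim])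
      rw [this]
      simp [Complex.norm_real, abs_of_pos hcrepos]
    rw [hhξ, hhr, habsc]
    constructor
    · have k1 : 1/Real.sqrt 2 ≤ 1 := by
        rw [div_le_one hsqrt2pos]; exact hsqrt2
      have k2 : ‖ξ‖ / (r + ‖ξ‖) ≤ 1 := by
        rw [div_le_one (by positivity)]; linarith
      have k3 : x / s ≤ 1 := by rw [div_le_one hs0]; exact hxs
      have kk : (1/Real.sqrt 2) * (‖ξ‖ / (r + ‖ξ‖)) * (x/s) ≤ 1 := by
        have b1 : (1/Real.sqrt 2) * (‖ξ‖ / (r + ‖ξ‖)) ≤ 1 :=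
          mul_le_one₀ k1 (by positivity) k2
        exact mul_le_one₀ b1 (by positivity) k3
      nlinarith [hcrepos, kk, mul_le_mul_of_nonneg_right kk hcrepos.le]
    · have k1 : 1 ≤ Real.sqrt 2 := hsqrt2
      have k2 : 1 ≤ (r + ‖ξ‖)/r := by
        rw [le_div_iff₀ hr]; linarith
      have k3 : 1 ≤ s/x := by rw [le_div_iff₀ hx0]; linarith
      calc c.re = 1*1*1*c.re := by ring
        _ ≤ Real.sqrt 2 * ((r + ‖ξ‖)/r) * (s/x) * c.re := by
            gcongr
  · -- nonconstant case
    have hppos : ∀ t : ℝ, 0 < t → (h t).im = 0 ∧ 0 < (h t).re :=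
      fun t ht => ⟨(hpos t ht).1, hxpos t ht⟩
    set A : ℝ := (h ((r:ℝ):ℂ)).re / W with hAdef
    have hA0 : 0 < A := div_pos (hxpos r hr) hW0
    have hWW : ((W:ℂ)) * ((W:ℂ)) = ((r:ℝ):ℂ) := by
      rw [← Complex.ofReal_mul]
      congr 1
      rw [hWdef]
      exact Real.mul_self_sqrt hr.le
    have hhr : h ((r:ℝ):ℂ) = (((h ((r:ℝ):ℂ)).re : ℝ) : ℂ) :=
      Complex.ext rfl (by simp [(hpos r hr).1])
    have hFW : h ((W:ℂ) * (W:ℂ)) * ((W:ℂ))⁻¹ = ((A:ℝ) : ℂ) := by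
      rw [hWW, hhr, hAdef]
      push_cast
      ring
    have hcore := CBFaux.schwarz_pick_core hd' hpos him hxpos hmaps hx0 hW0 hA0 hFW
    -- notation
    set P : ℝ := ‖z + (W:ℂ)‖ with hPdef
    set Q : ℝ := ‖z - (W:ℂ)‖ with hQdef
    have hQP : Q < P := CBFaux.abs_sub_lt_abs_add hW0 hx0
    have hQ0 : 0 ≤ Q := norm_nonneg _
    have hP0 : 0 < P := lt_of_le_of_lt hQ0 hQP
    set Fz : ℂ := h (z*z) * z⁻¹ with hFzdef
    set m : ℝ := ‖Fz‖ with hmdef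
    have hm0 : 0 ≤ m := norm_nonneg _
    have habsA : ‖((A:ℝ):ℂ)‖ = A := by
      rw [Complex.norm_real, Real.norm_eq_abs, abs_of_pos hA0]
    -- triangle inequalities
    have h1'' : m - A ≤ (Q/P) * (m + A) := by
      have t1 : m - A ≤ ‖Fz - ((A:ℝ):ℂ)‖ := by
        have := norm_sub_norm_le Fz ((A:ℝ):ℂ)
        rw [habsA] at this
        exact this
      have t2 : ‖Fz + ((A:ℝ):ℂ)‖ ≤ m + A := by
        have := norm_add_le Fz ((A:ℝ):ℂ)
        rw [habsA] at this
        exact this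
      have t3 := hcore
      have : ‖Fz - ((A:ℝ):ℂ)‖ ≤ (Q/P) * (m + A) := by
        refine t3.trans ?_
        apply mul_le_mul_of_nonneg_left t2 (by positivity)
      linarith
    have h2'' : A - m ≤ (Q/P) * (m + A) := by
      have t1 : A - m ≤ ‖Fz - ((A:ℝ):ℂ)‖ := by
        have := norm_sub_norm_le ((A:ℝ):ℂ) Fz
        rw [norm_sub_rev,
          habsA] at this
        exact this
      have t2 : ‖Fz + ((A:ℝ):ℂ)‖ ≤ m + A := by
        have := norm_add_le Fz ((A:ℝ):ℂ)
        rw [habsA] at this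
        exact this
      have : ‖Fz - ((A:ℝ):ℂ)‖ ≤ (Q/P) * (m + A) := by
        refine hcore.trans ?_
        apply mul_le_mul_of_nonneg_left t2 (by positivity)
      linarith
    have h1p : (m - A) * P ≤ Q * (m + A) := by
      rw [div_mul_eq_mul_div] at h1''
      exact (le_div_iff₀ hP0).1 h1''
    have h2p : (A - m) * P ≤ Q * (m + A) := by
      rw [div_mul_eq_mul_div] at h2''
      exact (le_div_iff₀ hP0).1 h2''
    -- parallelogram identities
    have hreW : (z * (starRingEnd ℂ) ((W:ℝ):ℂ)).re = W * x := by
      rw [Complex.conj_ofReal, mul_comm, Complex.re_ofReal_mul]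
    have hpar : P^2 + Q^2 = 2*(s^2 + W^2) := by
      rw [hPdef, hQdef, Complex.sq_norm, Complex.sq_norm, Complex.normSq_add,
        Complex.normSq_sub, hreW]
      rw [← Complex.sq_norm z, ← hsdef, Complex.normSq_ofReal]
      ring
    have hdiffPQ : P^2 - Q^2 = 4*(W*x) := by
      rw [hPdef, hQdef, Complex.sq_norm, Complex.sq_norm, Complex.normSq_add,
        Complex.normSq_sub, hreW]
      ring
    have e1 : m*(P - Q) ≤ A*(P + Q) := by nlinarith [h1p]
    have e2 : A*(P - Q) ≤ m*(P + Q) := by nlinarith [h2p]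
    have key_up : m*(4*(W*x)) ≤ A*(4*(s^2+W^2)) := by
      have step1 : m*((P-Q)*(P+Q)) ≤ A*((P+Q)*(P+Q)) := by
        nlinarith [mul_le_mul_of_nonneg_right e1 (by positivity : (0:ℝ) ≤ P + Q)]
      have step2 : A*((P+Q)*(P+Q)) ≤ A*(2*(P^2+Q^2)) := by
        nlinarith [sq_nonneg (P-Q), hA0.le]
      have e3 : m*((P-Q)*(P+Q)) = m*(4*(W*x)) := by
        rw [show (P-Q)*(P+Q) = P^2 - Q^2 from by ring, hdiffPQ]
      have e4 : A*(2*(P^2+Q^2)) = A*(4*(s^2+W^2)) := by rw [hpar]; ring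
      linarith
    have key_lo : A*(4*(W*x)) ≤ m*(4*(s^2+W^2)) := by
      have step1 : A*((P-Q)*(P+Q)) ≤ m*((P+Q)*(P+Q)) := by
        nlinarith [mul_le_mul_of_nonneg_right e2 (by positivity : (0:ℝ) ≤ P + Q)]
      have step2 : m*((P+Q)*(P+Q)) ≤ m*(2*(P^2+Q^2)) := by
        nlinarith [sq_nonneg (P-Q), hm0]
      have e3 : A*((P-Q)*(P+Q)) = A*(4*(W*x)) := by
        rw [show (P-Q)*(P+Q) = P^2 - Q^2 from by ring, hdiffPQ]
      have e4 : m*(2*(P^2+Q^2)) = m*(4*(s^2+W^2)) := by rw [hpar]; ring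
      linarith
    -- conversions
    have hzne : z ≠ 0 := by
      intro hc
      have h9 : (0:ℝ) < x := hx0
      rw [hxdef, hc] at h9
      simp at h9
    have habshξ : ‖h ξ‖ = m * s := by
      rw [hmdef, hFzdef, hzz, norm_mul, norm_inv, ← hsdef]
      field_simp
    have habshr : (h ((r:ℝ):ℂ)).re = A * W := by
      rw [hAdef]
      field_simp
    constructor
    · -- lower bound
      rw [habshξ, habshr, ← hs2, ← hW2]
      have step_c : A*s*(W*x)/(s^2+W^2) ≤ m*s := by
        rw [div_le_iff₀ (by positivity)]
        have hh := mul_le_mul_of_nonneg_right key_lo hs0.le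
        calc A*s*(W*x) = (A*(4*(W*x))*s)/4 := by ring
          _ ≤ (m*(4*(s^2+W^2))*s)/4 := by linarith
          _ = m*s*(s^2+W^2) := by ring
      have lower_eq : (1/Real.sqrt 2) * (s^2/(W^2 + s^2)) * (x/s) * (A*W)
          = (A*s*(W*x)/(s^2+W^2)) * (1/Real.sqrt 2) := by
        field_simp
        ring
      rw [lower_eq]
      refine le_trans ?_ step_c
      apply mul_le_of_le_one_right (by positivity)
      rw [div_le_one hsqrt2pos]
      exact hsqrt2
    · -- upper bound
      rw [habshξ, habshr, ← hs2, ← hW2]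
      have step_a : m*s ≤ A*s*(s^2+W^2)/(W*x) := by
        rw [le_div_iff₀ (by positivity)]
        have hh := mul_le_mul_of_nonneg_right key_up hs0.le
        calc m*s*(W*x) = (m*(4*(W*x))*s)/4 := by ring
          _ ≤ (A*(4*(s^2+W^2))*s)/4 := by linarith
          _ = A*s*(s^2+W^2) := by ring
      have target_eq : Real.sqrt 2 * ((W^2 + s^2)/W^2) * (s/x) * (A*W)
          = (A*s*(s^2+W^2)/(W*x)) * Real.sqrt 2 := by
        field_simp
        ring
      rw [target_eq]
      refine step_a.trans ?_
      exact le_mul_of_one_le_right (by positivity) hsqrt2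
end

section
/- Let f be a non-constant Rogers function and suppose ζ ∈ H satisfies f(ζ) ∈ (0, ∞) (i.e., ζ lies on the spine Γ_f of f). Then the function h(ξ) = ((ξ − ζ)(ξ + conj(ζ)))/(f(ξ) − f(ζ)), defined for ξ ∈ H ∖ {ζ} and extended at ξ = ζ by h(ζ) = 2·Re ζ / f′(ζ), is a Rogers function. -/
open Complex Metric Set Function

/-- Minimum principle for the real part on the right half-plane. -/
lemma aux_eq_const_of_re_eq_zero {F : ℂ → ℂ}
    (hd : DifferentiableOn ℂ F {ξ : ℂ | 0 < ξ.re})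
    (hre : ∀ ξ ∈ {ξ : ℂ | 0 < ξ.re}, 0 ≤ (F ξ).re)
    {ξ0 : ℂ} (h0 : ξ0 ∈ {ξ : ℂ | 0 < ξ.re}) (hz : (F ξ0).re = 0) :
    ∀ ξ ∈ {ξ : ℂ | 0 < ξ.re}, F ξ = F ξ0 := by
  set U : Set ℂ := {ξ : ℂ | 0 < ξ.re} with hU_def
  have hUo : IsOpen U := isOpen_lt continuous_const continuous_re
  have hUc : Convex ℝ U := convex_halfSpace_re_gt 0
  have hE : DifferentiableOn ℂ (fun z => Complex.exp (-F z)) U := hd.neg.cexp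
  have hmax : IsMaxOn (norm ∘ fun z => Complex.exp (-F z)) U ξ0 := by
    intro ξ hξ
    simp only [Set.mem_setOf_eq, comp_apply, Complex.norm_exp, neg_re]
    exact Real.exp_le_exp.mpr (by simpa [hz] using hre ξ hξ)
  have heq := Complex.eqOn_of_isPreconnected_of_isMaxOn_norm hUc.isPreconnected hUo hE h0 hmax
  have hder : ∀ ξ ∈ U, fderivWithin ℂ F U ξ = 0 := by
    intro ξ hξ
    have hFd : DifferentiableAt ℂ F ξ := (hd ξ hξ).differentiableAt (hUo.mem_nhds hξ)
    have h1 : HasDerivAt (fun z => Complex.exp (-F z))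
        (Complex.exp (-F ξ) * -deriv F ξ) ξ := hFd.hasDerivAt.neg.cexp
    have h2 : deriv (fun z => Complex.exp (-F z)) ξ = 0 := by
      have hev : (fun z => Complex.exp (-F z)) =ᶠ[nhds ξ]
          fun _ => Complex.exp (-F ξ0) :=
        Filter.eventuallyEq_of_mem (hUo.mem_nhds hξ) (fun x hx => heq hx)
      rw [hev.deriv_eq]; exact deriv_const _ _
    have h3 : Complex.exp (-F ξ) * -deriv F ξ = 0 := by rw [← h1.deriv]; exact h2
    have h4 : deriv F ξ = 0 := by
      rcases mul_eq_zero.mp h3 with h | h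
      · exact absurd h (Complex.exp_ne_zero _)
      · simpa using h
    have h5 : HasFDerivAt F (0 : ℂ →L[ℂ] ℂ) ξ := by
      have h6 := hFd.hasDerivAt
      rw [h4] at h6
      have h7 : ContinuousLinearMap.toSpanSingleton ℂ (0 : ℂ) = 0 := by
        ext z; simp
      have h8 := h6.hasFDerivAt
      rwa [h7] at h8
    rw [fderivWithin_of_isOpen hUo hξ]
    exact h5.fderiv
  intro ξ hξ
  exact hUc.is_const_of_fderivWithin_eq_zero hd hder hξ h0

/-- Real-variable core of the Apollonius-disc argument. -/
lemma aux_disc_real (ρ c1 c2 d1 d2 w1 w2 : ℝ) (hρ0 : 0 ≤ ρ) (hρ1 : ρ < 1)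
    (h1 : (w1 - d1) ^ 2 + (w2 - d2) ^ 2 ≤ ρ ^ 2 * ((w1 + c1) ^ 2 + (w2 + c2) ^ 2))
    (hD1 : 0 ≤ d1 + ρ ^ 2 * c1)
    (h2 : ρ ^ 2 * ((c1 + d1) ^ 2 + (c2 + d2) ^ 2) ≤ (d1 + ρ ^ 2 * c1) ^ 2) :
    0 ≤ w1 := by
  have hs : 0 < 1 - ρ ^ 2 := by nlinarith
  have e1 : ((1 - ρ ^ 2) * w1 - (d1 + ρ ^ 2 * c1)) ^ 2
      + ((1 - ρ ^ 2) * w2 - (d2 + ρ ^ 2 * c2)) ^ 2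
      ≤ ρ ^ 2 * ((c1 + d1) ^ 2 + (c2 + d2) ^ 2) := by
    nlinarith [mul_le_mul_of_nonneg_left h1 hs.le]
  have e2 : ((1 - ρ ^ 2) * w1 - (d1 + ρ ^ 2 * c1)) ^ 2
      ≤ (d1 + ρ ^ 2 * c1) ^ 2 := by
    nlinarith [e1, h2, sq_nonneg ((1 - ρ ^ 2) * w2 - (d2 + ρ ^ 2 * c2))]
  by_contra hneg
  push_neg at hneg
  have hpos : 0 < (1 - ρ ^ 2) * (-w1) := mul_pos hs (by linarith)
  nlinarith [e2, mul_nonneg hD1 hpos.le, mul_pos hpos hpos]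

/-- Apollonius-disc lemma: if the Möbius-image disc is inside
the right half-plane, then the Möbius image point has nonnegative real part. -/
lemma aux_disc_lemma {c d m : ℂ} {ρ : ℝ} (hρ1 : ρ < 1) (hm : ‖m‖ ≤ ρ)
    (hid : ρ * ‖c + d‖ ≤ d.re + ρ ^ 2 * c.re) :
    0 ≤ ((c * m + d) / (1 - m)).re := by
  have hρ0 : 0 ≤ ρ := le_trans (norm_nonneg m) hm
  have hm1 : (1 : ℂ) - m ≠ 0 := by
    intro h
    rw [sub_eq_zero] at h
    rw [← h] at hm
    simp at hm
    linarith
  set w : ℂ := (c * m + d) / (1 - m) with hw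
  have hkey : w - d = m * (w + c) := by
    rw [hw]
    field_simp
    ring
  have habs : ‖w - d‖ ≤ ρ * ‖w + c‖ := by
    rw [hkey, norm_mul]
    exact mul_le_mul_of_nonneg_right hm (norm_nonneg _)
  have h1 : normSq (w - d) ≤ ρ ^ 2 * normSq (w + c) := by
    calc normSq (w - d) = ‖w - d‖ ^ 2 := (Complex.sq_norm _).symm
      _ ≤ (ρ * ‖w + c‖) ^ 2 := by
          exact pow_le_pow_left₀ (norm_nonneg _) habs 2
      _ = ρ ^ 2 * normSq (w + c) := by rw [mul_pow, Complex.sq_norm]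
  have hD1 : 0 ≤ d.re + ρ ^ 2 * c.re :=
    le_trans (mul_nonneg hρ0 (norm_nonneg _)) hid
  have habs2 : ‖c + d‖ ^ 2 = (c.re + d.re) ^ 2 + (c.im + d.im) ^ 2 := by
    rw [Complex.sq_norm, Complex.normSq_apply]
    simp only [Complex.add_re, Complex.add_im]
    ring
  have h2 : ρ ^ 2 * ((c.re + d.re) ^ 2 + (c.im + d.im) ^ 2)
      ≤ (d.re + ρ ^ 2 * c.re) ^ 2 := by
    nlinarith [mul_self_le_mul_self (mul_nonneg hρ0 (norm_nonneg (c + d))) hid, habs2]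
  have h1' : (w.re - d.re) ^ 2 + (w.im - d.im) ^ 2
      ≤ ρ ^ 2 * ((w.re + c.re) ^ 2 + (w.im + c.im) ^ 2) := by
    have h1c := h1
    simp only [Complex.normSq_apply, Complex.sub_re, Complex.sub_im, Complex.add_re,
      Complex.add_im] at h1c
    nlinarith [h1c]
  exact aux_disc_real ρ c.re c.im d.re d.im w.re w.im hρ0 hρ1 h1' hD1 h2

set_option maxHeartbeats 1000000 in
/-- For a non-constant Rogers function `f` and a spine point `ζ` (i.e.
`f(ζ) ∈ (0, ∞)`), the difference quotient
`h(ξ) = ((ξ−ζ)(ξ+conj ζ))/(f(ξ)−f(ζ))`, extended at `ξ = ζ` by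
`h(ζ) = 2·Re ζ / f′(ζ)`, is a Rogers function. -/
theorem stmt_11 (f : ℂ → ℂ) (hf : IsRogers f)
    (hnc : ∃ ξ₁ ξ₂ : ℂ, 0 < ξ₁.re ∧ 0 < ξ₂.re ∧ f ξ₁ ≠ f ξ₂)
    (ζ : ℂ) (hζ : 0 < ζ.re) (hfζim : (f ζ).im = 0) (hfζre : 0 < (f ζ).re) :
    ∃ h : ℂ → ℂ, IsRogers h ∧
      (∀ ξ : ℂ, 0 < ξ.re → ξ ≠ ζ →
        h ξ = ((ξ - ζ) * (ξ + (starRingEnd ℂ) ζ)) / (f ξ - f ζ)) ∧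
      h ζ = 2 * (ζ.re : ℂ) / deriv f ζ := by
  obtain ⟨hfd, hfre⟩ := hf
  have hUo : IsOpen {ξ : ℂ | 0 < ξ.re} := isOpen_lt continuous_const continuous_re
  have hζU : ζ ∈ {ξ : ℂ | 0 < ξ.re} := hζ
  have hne_zero : ∀ ξ : ℂ, 0 < ξ.re → ξ ≠ 0 := by
    intro ξ hξ h
    rw [h] at hξ
    simp at hξ
  have hζ0 : ζ ≠ 0 := hne_zero ζ hζ
  have hζc0 : (starRingEnd ℂ) ζ ≠ 0 := by simpa using hζ0
  -- generic half-plane facts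
  have habs_lt_half : ∀ w z : ℂ, 0 < w.re → 0 < z.re →
      ‖w - z‖ < ‖w + (starRingEnd ℂ) z‖ := by
    intro w z hw hz
    rw [Complex.norm_def, Complex.norm_def]
    apply Real.sqrt_lt_sqrt (normSq_nonneg _)
    simp only [Complex.normSq_apply, Complex.sub_re, Complex.sub_im, Complex.add_re,
      Complex.add_im, Complex.conj_re, Complex.conj_im]
    nlinarith [mul_pos hw hz]
  have hre_add_conj : ∀ w z : ℂ, 0 < w.re → 0 < z.re →
      w + (starRingEnd ℂ) z ≠ 0 := by
    intro w z hw hz h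
    have : (w + (starRingEnd ℂ) z).re = w.re + z.re := by
      simp [Complex.add_re, Complex.conj_re]
    rw [h] at this
    simp at this
    linarith
  set t : ℝ := (f ζ).re with ht_def
  have ht : 0 < t := hfζre
  have hfζ : f ζ = (t : ℂ) := by
    apply Complex.ext
    · simp [ht_def]
    · simp [hfζim]
  set v0 : ℂ := (t : ℂ) / ζ with hv0_def
  have hv0conj : (starRingEnd ℂ) v0 = (t : ℂ) / (starRingEnd ℂ) ζ := by
    rw [hv0_def, map_div₀, Complex.conj_ofReal]
  set r : ℝ := v0.re with hr_def
  have hnsζ : 0 < normSq ζ := normSq_pos.mpr hζ0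
  have hrval : r = t * ζ.re / normSq ζ := by
    rw [hr_def, hv0_def, Complex.div_re]
    simp only [Complex.ofReal_re, Complex.ofReal_im, zero_mul, zero_div, add_zero]
  have hr : 0 < r := by
    rw [hrval]
    exact div_pos (mul_pos ht hζ) hnsζ
  -- the function v
  set v : ℂ → ℂ := fun ξ => f ξ / ξ with hv_def
  have hvd : DifferentiableOn ℂ v {ξ : ℂ | 0 < ξ.re} := by
    simp only [hv_def]
    exact hfd.div differentiableOn_id (fun ξ hξ => hne_zero ξ hξ)
  have hvre : ∀ ξ ∈ {ξ : ℂ | 0 < ξ.re}, 0 ≤ (v ξ).re := by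
    intro ξ hξ
    simp only [hv_def]
    exact hfre ξ hξ
  have hvζ : v ζ = v0 := by
    simp only [hv_def]
    rw [hfζ]
  have hvpos : ∀ ξ ∈ {ξ : ℂ | 0 < ξ.re}, 0 < (v ξ).re := by
    intro ξ hξ
    rcases (hvre ξ hξ).lt_or_eq with h | h
    · exact h
    · exfalso
      have hall := aux_eq_const_of_re_eq_zero hvd hvre hξ h.symm
      have h2 := hall ζ hζU
      have : r = (v ξ).re := by rw [hr_def, ← hvζ, h2]
      rw [← h] at this
      linarith [hr]
  -- membership in ball
  have hmem : ∀ u : ℂ, u ∈ ball (0:ℂ) 1 ↔ ‖u‖ < 1 := by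
    intro u
    rw [mem_ball_zero_iff]
  have h1u : ∀ u : ℂ, ‖u‖ < 1 → (1:ℂ) - u ≠ 0 := by
    intro u hu h
    rw [sub_eq_zero] at h
    rw [← h] at hu
    simp at hu
  -- the Cayley-type map σ of the disc onto the half-plane
  set σ : ℂ → ℂ := fun u => (ζ + u * (starRingEnd ℂ) ζ) / (1 - u) with hσ_def
  have hσU : ∀ u : ℂ, ‖u‖ < 1 → 0 < (σ u).re := by
    intro u hu
    have hd1 : (1:ℂ) - u ≠ 0 := h1u u hu
    have hns : 0 < normSq (1 - u) := normSq_pos.mpr hd1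
    show 0 < ((ζ + u * (starRingEnd ℂ) ζ) / (1 - u)).re
    rw [Complex.div_re, ← add_div]
    have hnum : (ζ + u * (starRingEnd ℂ) ζ).re * (1 - u).re
        + (ζ + u * (starRingEnd ℂ) ζ).im * (1 - u).im = (1 - normSq u) * ζ.re := by
      simp only [Complex.add_re, Complex.add_im, Complex.mul_re, Complex.mul_im,
        Complex.sub_re, Complex.sub_im, Complex.one_re, Complex.one_im, Complex.conj_re,
        Complex.conj_im, Complex.normSq_apply]
      ring
    rw [hnum]
    have hu2 : normSq u < 1 := by
      rw [← Complex.sq_norm]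
      nlinarith [norm_nonneg u]
    exact div_pos (mul_pos (by linarith) hζ) hns
  have hσ0 : σ 0 = ζ := by
    simp only [hσ_def]
    simp
  -- the map Φ
  set Φ : ℂ → ℂ := fun u => (v (σ u) - v0) / (v (σ u) + (starRingEnd ℂ) v0) with hΦ_def
  have hσmaps : MapsTo σ (ball (0:ℂ) 1) {ξ : ℂ | 0 < ξ.re} :=
    fun u hu => hσU u ((hmem u).mp hu)
  have hσd : DifferentiableOn ℂ σ (ball (0:ℂ) 1) := by
    simp only [hσ_def]
    exact ((differentiableOn_const _).add (differentiableOn_id.mul_const _)).div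
      ((differentiableOn_const _).sub differentiableOn_id)
      (fun u hu => h1u u ((hmem u).mp hu))
  have hvden : ∀ w : ℂ, 0 < w.re → w + (starRingEnd ℂ) v0 ≠ 0 :=
    fun w hw => hre_add_conj w v0 hw hr
  have hΦd : DifferentiableOn ℂ Φ (ball (0:ℂ) 1) := by
    have hvσ : DifferentiableOn ℂ (fun u => v (σ u)) (ball (0:ℂ) 1) :=
      hvd.comp hσd hσmaps
    simp only [hΦ_def]
    exact (hvσ.sub_const _).div (hvσ.add_const _)
      (fun u hu => hvden _ (hvpos _ (hσmaps hu)))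
  have hΦmaps : MapsTo Φ (ball (0:ℂ) 1) (ball (0:ℂ) 1) := by
    intro u hu
    rw [hmem]
    show ‖(v (σ u) - v0) / (v (σ u) + (starRingEnd ℂ) v0)‖ < 1
    rw [norm_div]
    rw [div_lt_one (norm_pos_iff.mpr (hvden _ (hvpos _ (hσmaps hu))))]
    exact habs_lt_half (v (σ u)) v0 (hvpos _ (hσmaps hu)) hr
  have hΦ0 : Φ 0 = 0 := by
    show (v (σ 0) - v0) / (v (σ 0) + (starRingEnd ℂ) v0) = 0
    rw [hσ0, hvζ]
    simp
  have hSchwarz : ∀ u : ℂ, ‖u‖ < 1 → ‖Φ u‖ ≤ ‖u‖ :=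
    fun u hu => Complex.norm_le_norm_of_mapsTo_ball hΦd (hΦmaps.mono_right ball_subset_closedBall) hΦ0 hu
  -- the function G
  set G : ℂ → ℂ := fun ξ => ξ * dslope f ζ ξ / (ξ + (starRingEnd ℂ) ζ) with hG_def
  have hbne : ∀ ξ : ℂ, 0 < ξ.re → ξ + (starRingEnd ℂ) ζ ≠ 0 :=
    fun ξ hξ => hre_add_conj ξ ζ hξ hζ
  have hdsd : DifferentiableOn ℂ (dslope f ζ) {ξ : ℂ | 0 < ξ.re} :=
    (Complex.differentiableOn_dslope (hUo.mem_nhds hζU)).mpr hfd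
  have hGd : DifferentiableOn ℂ G {ξ : ℂ | 0 < ξ.re} := by
    simp only [hG_def]
    exact (differentiableOn_id.mul hdsd).div
      (differentiableOn_id.add_const _) (fun ξ hξ => hbne ξ hξ)
  have hGval : ∀ ξ : ℂ, 0 < ξ.re → ξ ≠ ζ →
      G ξ = ξ * (f ξ - f ζ) / ((ξ - ζ) * (ξ + (starRingEnd ℂ) ζ)) := by
    intro ξ hξ hne
    show ξ * dslope f ζ ξ / (ξ + (starRingEnd ℂ) ζ) = _
    rw [dslope_of_ne f hne, slope_def_field]
    field_simp [sub_ne_zero.mpr hne, hbne ξ hξ]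
  -- positivity of Re G away from ζ
  have hGre' : ∀ ξ : ℂ, 0 < ξ.re → ξ ≠ ζ → 0 ≤ (G ξ).re := by
    intro ξ hξ hneζ
    have ha : ξ - ζ ≠ 0 := sub_ne_zero.mpr hneζ
    have hb : ξ + (starRingEnd ℂ) ζ ≠ 0 := hbne ξ hξ
    set u : ℂ := (ξ - ζ) / (ξ + (starRingEnd ℂ) ζ) with hu_def
    have hρlt : ‖u‖ < 1 := by
      rw [hu_def, norm_div]
      rw [div_lt_one (norm_pos_iff.mpr hb)]
      exact habs_lt_half ξ ζ hξ hζ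
    have h1usub : (1:ℂ) - u ≠ 0 := h1u u hρlt
    have hσu : σ u = ξ := by
      show (ζ + u * (starRingEnd ℂ) ζ) / (1 - u) = ξ
      rw [div_eq_iff h1usub, hu_def]
      field_simp
      ring
    set m : ℂ := Φ u with hm_def
    have hmabs : ‖m‖ ≤ ‖u‖ := hSchwarz u hρlt
    have hmlt : ‖m‖ < 1 := lt_of_le_of_lt hmabs hρlt
    have hm1 : (1:ℂ) - m ≠ 0 := h1u m hmlt
    have hvden' : v ξ + (starRingEnd ℂ) v0 ≠ 0 := hvden (v ξ) (hvpos ξ hξ)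
    have hm_eq : m = (v ξ - v0) / (v ξ + (starRingEnd ℂ) v0) := by
      rw [hm_def]
      show (v (σ u) - v0) / (v (σ u) + (starRingEnd ℂ) v0) = _
      rw [hσu]
    have hv_eq : v ξ = (v0 + m * (starRingEnd ℂ) v0) / (1 - m) := by
      rw [eq_div_iff hm1, hm_eq]
      field_simp
      ring
    have hfξ : f ξ = ξ * v ξ := by
      simp only [hv_def]
      rw [mul_div_assoc']
      exact (mul_div_cancel_left₀ (f ξ) (hne_zero ξ hξ)).symm
    set cc : ℂ := (t : ℂ) * ξ / ((starRingEnd ℂ) ζ * (ξ - ζ)) with hcc_def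
    set dd : ℂ := (t : ℂ) * ξ / (ζ * (ξ + (starRingEnd ℂ) ζ)) with hdd_def
    have hmoeb : G ξ = (cc * m + dd) / (1 - m) := by
      rw [hGval ξ hξ hneζ, hfξ, hfζ, hv_eq, hcc_def, hdd_def, hv0conj, hv0_def]
      field_simp
      ring
    set ρ : ℝ := ‖u‖ with hρ_def
    have hsum : cc + dd = ((2 * r : ℝ) : ℂ) * ξ^2 / ((ξ - ζ) * (ξ + (starRingEnd ℂ) ζ)) := by
      have h2re : ((2 * r : ℝ) : ℂ) = (t:ℂ) * (ζ + (starRingEnd ℂ) ζ) / (ζ * (starRingEnd ℂ) ζ) := by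
        rw [Complex.add_conj, Complex.mul_conj, hrval]
        push_cast
        field_simp
      rw [hcc_def, hdd_def, h2re]
      field_simp
      ring
    have habs_sum : ρ * ‖cc + dd‖
        = 2 * r * normSq ξ / normSq (ξ + (starRingEnd ℂ) ζ) := by
      rw [hsum, hρ_def, hu_def, norm_div, norm_div, norm_mul, norm_pow, Complex.norm_real, Real.norm_eq_abs]
      rw [abs_of_pos (by linarith : (0:ℝ) < 2 * r), norm_mul]
      have haa : ‖ξ - ζ‖ ≠ 0 := norm_ne_zero_iff.mpr ha
      have hba : ‖ξ + (starRingEnd ℂ) ζ‖ ≠ 0 := norm_ne_zero_iff.mpr hb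
      rw [← Complex.sq_norm ξ, ← Complex.sq_norm (ξ + (starRingEnd ℂ) ζ)]
      field_simp
    have hρ2 : ρ^2 = normSq (ξ - ζ) / normSq (ξ + (starRingEnd ℂ) ζ) := by
      rw [hρ_def, Complex.sq_norm, hu_def, map_div₀]
    have hnsb : (0:ℝ) < normSq (ξ + (starRingEnd ℂ) ζ) := normSq_pos.mpr hb
    have hnsa : (0:ℝ) < normSq (ξ - ζ) := normSq_pos.mpr ha
    have hidC : dd.re + ρ^2 * cc.re = 2 * r * normSq ξ / normSq (ξ + (starRingEnd ℂ) ζ) := by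
      rw [hcc_def, hdd_def, hρ2, hrval, Complex.div_re, Complex.div_re,
        ← add_div, ← add_div, map_mul normSq, map_mul normSq,
        Complex.normSq_conj]
      field_simp [hnsζ.ne', hnsa.ne', hnsb.ne']
      simp only [Complex.normSq_apply, Complex.mul_re, Complex.mul_im, Complex.add_re,
        Complex.add_im, Complex.sub_re, Complex.sub_im, Complex.conj_re, Complex.conj_im,
        Complex.ofReal_re, Complex.ofReal_im]
      ring
    have hid : ρ * ‖cc + dd‖ ≤ dd.re + ρ^2 * cc.re :=
      le_of_eq (by rw [habs_sum, hidC])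
    have hpos := aux_disc_lemma hρlt hmabs hid
    rw [hmoeb]
    exact hpos
  -- positivity of Re G at ζ by continuity
  have hGreζ : 0 ≤ (G ζ).re := by
    have hcont : ContinuousAt G ζ :=
      ((hGd ζ hζU).differentiableAt (hUo.mem_nhds hζU)).continuousAt
    have hNB : (nhdsWithin ζ ({ξ : ℂ | 0 < ξ.re} \ {ζ})).NeBot := by
      have h1 : {ξ : ℂ | 0 < ξ.re} ∈ nhdsWithin ζ {(ζ:ℂ)}ᶜ :=
        mem_nhdsWithin_of_mem_nhds (hUo.mem_nhds hζU)
      have h2 : nhdsWithin ζ ({ξ : ℂ | 0 < ξ.re} \ {ζ}) = nhdsWithin ζ {(ζ:ℂ)}ᶜ := by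
        rw [diff_eq]
        exact nhdsWithin_inter_of_mem h1
      rw [h2]
      infer_instance
    have htend : Filter.Tendsto (fun ξ => (G ξ).re)
        (nhdsWithin ζ ({ξ : ℂ | 0 < ξ.re} \ {ζ})) (nhds ((G ζ).re)) :=
      ((Complex.continuous_re.continuousAt).comp hcont).tendsto.mono_left nhdsWithin_le_nhds
    apply ge_of_tendsto htend
    filter_upwards [self_mem_nhdsWithin] with η hη
    exact hGre' η hη.1 (by simpa using hη.2)
  have hGre : ∀ ξ ∈ {ξ : ℂ | 0 < ξ.re}, 0 ≤ (G ξ).re := by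
    intro η hη
    by_cases hη2 : η = ζ
    · rw [hη2]; exact hGreζ
    · exact hGre' η hη hη2
  -- G never vanishes
  have hGne : ∀ ξ : ℂ, 0 < ξ.re → G ξ ≠ 0 := by
    intro ξ hξ hzero
    have hall := aux_eq_const_of_re_eq_zero hGd hGre hξ (by rw [hzero]; simp)
    have hfconst : ∀ η : ℂ, 0 < η.re → f η = f ζ := by
      intro η hη
      by_cases hη2 : η = ζ
      · rw [hη2]
      · have hGη : G η = 0 := by rw [hall η hη, hzero]
        rw [hGval η hη hη2] at hGη
        rcases div_eq_zero_iff.mp hGη with h | h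
        · rcases mul_eq_zero.mp h with h' | h'
          · exact absurd h' (hne_zero η hη)
          · exact sub_eq_zero.mp h'
        · exact absurd h (mul_ne_zero (sub_ne_zero.mpr hη2) (hbne η hη))
    obtain ⟨ξ₁, ξ₂, h1, h2, hne12⟩ := hnc
    exact hne12 ((hfconst ξ₁ h1).trans (hfconst ξ₂ h2).symm)
  -- the final function
  refine ⟨fun ξ => ξ / G ξ, ⟨?_, ?_⟩, ?_, ?_⟩
  · exact differentiableOn_id.div hGd (fun ξ hξ => hGne ξ hξ)
  · intro ξ hξ
    have h1 : (ξ / G ξ) / ξ = (G ξ)⁻¹ := by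
      rw [div_right_comm, div_self (hne_zero ξ hξ), one_div]
    rw [h1, Complex.inv_re]
    exact div_nonneg (hGre ξ hξ) (normSq_nonneg _)
  · intro ξ hξ hneζ
    have hfne : f ξ - f ζ ≠ 0 := by
      intro h0
      apply hGne ξ hξ
      rw [hGval ξ hξ hneζ, h0]
      simp
    show ξ / G ξ = _
    rw [hGval ξ hξ hneζ]
    field_simp [hne_zero ξ hξ]
  · have hGζ : G ζ = ζ * deriv f ζ / (ζ + (starRingEnd ℂ) ζ) := by
      show ζ * dslope f ζ ζ / (ζ + (starRingEnd ℂ) ζ) = _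
      rw [dslope_same]
    have hdne : deriv f ζ ≠ 0 := by
      intro h0
      apply hGne ζ hζ
      rw [hGζ, h0]
      simp
    show ζ / G ζ = 2 * (ζ.re : ℂ) / deriv f ζ
    rw [hGζ, Complex.add_conj]
    have h2re0 : ((2 * ζ.re : ℝ) : ℂ) ≠ 0 := by
      rw [Complex.ofReal_ne_zero]
      positivity
    field_simp [hζ0, hdne]
    push_cast
    ring
end

section
/- Suppose f is a non-constant Rogers function, 0 < ϱ ≤ ∞, ε > 0, and φ(s) ≥ ε for all s ∈ (−ϱ, 0), where φ is the function in the exponential representation of f. Then there exists a constant C(ε) > 0 such that |f(ξ)|/|f(η)| ≥ C(ε)·(ξ/η)^{ε/π} whenever 0 < η ≤ ξ < ϱ. -/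
open MeasureTheory
open scoped ENNReal

lemma re_integrand (x s w : ℝ) (hx : 0 < x) :
    ((((x:ℝ):ℂ) / (((x:ℝ):ℂ) + Complex.I * (s:ℂ)) - 1 / (1 + ((|s|:ℝ):ℂ))) * ((w:ℝ):ℂ)).re
      = (x^2/(x^2+s^2) - 1/(1+|s|)) * w := by
  have hxs : x^2 + s^2 ≠ 0 := by positivity
  have habs : (1:ℝ) + |s| ≠ 0 := by positivity
  simp [Complex.div_re, Complex.normSq_apply, Complex.mul_re, Complex.mul_im,
    Complex.add_re, Complex.add_im, Complex.sub_re, Complex.sub_im, Complex.one_re,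
    Complex.one_im, Complex.ofReal_re, Complex.ofReal_im, Complex.I_re, Complex.I_im,
    Complex.div_im]
  left
  ring_nf

lemma key_integral (ξ η : ℝ) (hη : 0 < η) (hle : η ≤ ξ) :
    Real.log ξ - Real.log η - Real.log 2 / 2 ≤
      ∫ s in Set.Ioo (-ξ) 0, |s| * (ξ^2 - η^2) / ((ξ^2 + s^2) * (η^2 + s^2)) := by
  have hξ : 0 < ξ := lt_of_lt_of_le hη hle
  set G : ℝ → ℝ := fun s => -(1/2) * Real.log (η^2+s^2) + (1/2) * Real.log (ξ^2+s^2) with hG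
  have hcont : Continuous fun s : ℝ => |s| * (ξ^2 - η^2) / ((ξ^2 + s^2) * (η^2 + s^2)) := by
    apply Continuous.div (by continuity) (by continuity)
    intro s; positivity
  have hderiv : ∀ t ∈ Set.uIcc (-ξ) 0,
      HasDerivAt G (|t| * (ξ^2 - η^2) / ((ξ^2 + t^2) * (η^2 + t^2))) t := by
    intro t ht
    rw [Set.uIcc_of_le (by linarith)] at ht
    have ht0 : t ≤ 0 := ht.2
    have h1 : HasDerivAt (fun s : ℝ => η^2 + s^2) (2*t) t := by
      simpa using (hasDerivAt_pow 2 t).const_add (η^2)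
    have h2 : HasDerivAt (fun s : ℝ => ξ^2 + s^2) (2*t) t := by
      simpa using (hasDerivAt_pow 2 t).const_add (ξ^2)
    have hd1 : HasDerivAt (fun s => Real.log (η^2+s^2)) (2*t/(η^2+t^2)) t :=
      h1.log (by positivity)
    have hd2 : HasDerivAt (fun s => Real.log (ξ^2+s^2)) (2*t/(ξ^2+t^2)) t :=
      h2.log (by positivity)
    have := (hd1.const_mul (-(1/2):ℝ)).add (hd2.const_mul ((1/2):ℝ))
    convert this using 1
    · rfl
    · rfl
    · rfl
    have habs : |t| = -t := abs_of_nonpos ht0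
    rw [habs]
    field_simp
    ring
  have hII : IntervalIntegrable (fun s : ℝ => |s| * (ξ^2 - η^2) / ((ξ^2 + s^2) * (η^2 + s^2)))
      volume (-ξ) 0 := hcont.intervalIntegrable _ _
  have hFTC := intervalIntegral.integral_eq_sub_of_hasDerivAt hderiv hII
  have heq : ∫ s in Set.Ioo (-ξ) 0, |s| * (ξ^2 - η^2) / ((ξ^2 + s^2) * (η^2 + s^2))
      = G 0 - G (-ξ) := by
    rw [← hFTC, intervalIntegral.integral_of_le (by linarith), integral_Ioc_eq_integral_Ioo]
  rw [heq, hG]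
  simp only [neg_neg]
  have e1 : Real.log (η^2 + 0^2) = 2 * Real.log η := by
    rw [show η^2 + 0^2 = η^2 by ring, Real.log_pow]; push_cast; ring
  have e2 : Real.log (ξ^2 + 0^2) = 2 * Real.log ξ := by
    rw [show ξ^2 + 0^2 = ξ^2 by ring, Real.log_pow]; push_cast; ring
  have e3 : Real.log (ξ^2 + (-ξ)^2) = Real.log 2 + 2 * Real.log ξ := by
    rw [show ξ^2 + (-ξ)^2 = 2 * ξ^2 by ring, Real.log_mul (by norm_num) (by positivity)]
    rw [show Real.log (ξ^2) = 2 * Real.log ξ by rw [Real.log_pow]; push_cast; ring]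
  have e4 : 2 * Real.log ξ ≤ Real.log (η^2 + (-ξ)^2) := by
    rw [show (2:ℝ) * Real.log ξ = Real.log (ξ^2) by rw [Real.log_pow]; push_cast; ring]
    apply Real.log_le_log (by positivity)
    nlinarith
  rw [e1, e2, e3]
  linarith

/-- If a non-constant Rogers function `f` has exponential representation with
density `φ` satisfying `φ(s) ≥ ε` for `s ∈ (−ϱ, 0)`, then
`|f(ξ)|/|f(η)| ≥ C(ε)·(ξ/η)^{ε/π}` for `0 < η ≤ ξ < ϱ`, where `C(ε) > 0`
depends only on `ε`. -/
theorem stmt_13 (ε : ℝ) (hε : 0 < ε) :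
    ∃ C : ℝ, 0 < C ∧
      ∀ (f : ℂ → ℂ) (c : ℝ) (φ : ℝ → ℝ) (ϱ : ℝ≥0∞),
        0 < c → Measurable φ → (∀ s : ℝ, φ s ∈ Set.Icc 0 Real.pi) →
        (∀ ξ : ℂ, 0 < ξ.re →
          Integrable (fun s : ℝ =>
            (ξ / (ξ + Complex.I * (s : ℂ)) - 1 / (1 + ((|s| : ℝ) : ℂ))) * ((φ s / |s| : ℝ) : ℂ))) →
        (∀ ξ : ℂ, 0 < ξ.re →
          f ξ = (c : ℂ) * Complex.exp ((1 / (Real.pi : ℂ)) *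
            ∫ s : ℝ,
              (ξ / (ξ + Complex.I * (s : ℂ)) - 1 / (1 + ((|s| : ℝ) : ℂ))) * ((φ s / |s| : ℝ) : ℂ))) →
        (∃ ξ₁ ξ₂ : ℂ, 0 < ξ₁.re ∧ 0 < ξ₂.re ∧ f ξ₁ ≠ f ξ₂) →
        0 < ϱ →
        (∀ s : ℝ, s < 0 → ENNReal.ofReal (-s) < ϱ → ε ≤ φ s) →
        ∀ ξ η : ℝ, 0 < η → η ≤ ξ → ENNReal.ofReal ξ < ϱ →
          C * (ξ / η) ^ (ε / Real.pi) ≤ ‖f ξ‖ / ‖f η‖ := by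
  refine ⟨Real.exp (-(ε / Real.pi) * (Real.log 2 / 2)), Real.exp_pos _, ?_⟩
  intro f c φ ϱ hc hφm hφrange hInt hrep _ hϱ hφε ξ η hη hle hξϱ
  have hπ : (0:ℝ) < Real.pi := Real.pi_pos
  have hξ : 0 < ξ := lt_of_lt_of_le hη hle
  set g : ℝ → ℝ → ℝ := fun x s => (x^2/(x^2+s^2) - 1/(1+|s|)) * (φ s / |s|) with hg
  -- integrability of g
  have hInt' : ∀ x : ℝ, 0 < x → Integrable (g x) := by
    intro x hx
    have hxre : (0:ℝ) < ((x:ℂ)).re := by simpa using hx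
    have h := (hInt (x:ℂ) hxre).re
    refine h.congr (Filter.Eventually.of_forall fun s => ?_)
    exact re_integrand x s (φ s / |s|) hx
  -- abs formula
  have habs : ∀ x : ℝ, 0 < x →
      ‖f x‖ = c * Real.exp ((1/Real.pi) * ∫ s, g x s) := by
    intro x hx
    have hxre : (0:ℝ) < ((x:ℂ)).re := by simpa using hx
    rw [hrep (x:ℂ) hxre, norm_mul, Complex.norm_exp, Complex.norm_real, Real.norm_eq_abs, abs_of_pos hc]
    congr 1
    have hre : ((1 / (Real.pi:ℂ)) *
        ∫ s : ℝ, (((x:ℂ)) / (((x:ℂ)) + Complex.I * (s : ℂ)) - 1 / (1 + ((|s| : ℝ) : ℂ)))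
          * ((φ s / |s| : ℝ) : ℂ)).re
        = (1/Real.pi) * (∫ s : ℝ, (((x:ℂ)) / (((x:ℂ)) + Complex.I * (s : ℂ))
            - 1 / (1 + ((|s| : ℝ) : ℂ))) * ((φ s / |s| : ℝ) : ℂ)).re := by
      rw [show (1/(Real.pi:ℂ)) = (((1/Real.pi : ℝ)):ℂ) by push_cast; ring]
      simp [Complex.re_ofReal_mul]
    rw [hre]
    have h2 := integral_re (hInt (x:ℂ) hxre)
    simp only [RCLike.re_to_complex] at h2
    rw [← h2]
    exact congrArg Real.exp (congrArg (fun t => 1/Real.pi * t) (integral_congr_ae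
      (Filter.Eventually.of_forall fun s => re_integrand x s (φ s / |s|) hx)))
  -- the difference function
  set D : ℝ → ℝ := fun s => g ξ s - g η s with hDdef
  have hDeq : ∀ s, D s = (ξ^2/(ξ^2+s^2) - η^2/(η^2+s^2)) * (φ s / |s|) := by
    intro s; simp only [hDdef, hg]; ring
  have hbr : ∀ s : ℝ, 0 ≤ ξ^2/(ξ^2+s^2) - η^2/(η^2+s^2) := by
    intro s
    rw [sub_nonneg, div_le_div_iff₀ (by positivity) (by positivity)]
    nlinarith [mul_nonneg (mul_nonneg (sub_nonneg.2 hle) (by linarith : (0:ℝ) ≤ ξ + η)) (sq_nonneg s)]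
  have hD0 : ∀ s, 0 ≤ D s := by
    intro s
    rw [hDeq]
    exact mul_nonneg (hbr s) (div_nonneg (hφrange s).1 (abs_nonneg s))
  have hDint : Integrable D := (hInt' ξ hξ).sub (hInt' η hη)
  set m : ℝ → ℝ := fun s => |s| * (ξ^2 - η^2) / ((ξ^2 + s^2) * (η^2 + s^2)) with hm
  have hmcont : Continuous m := by
    rw [hm]
    exact (continuous_abs.mul continuous_const).div
      ((continuous_const.add (continuous_pow 2)).mul (continuous_const.add (continuous_pow 2)))
      (fun s => by positivity)
  have hsub : ξ^2 - η^2 ≥ 0 := by nlinarith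
  -- pointwise bound on Ioo (-ξ) 0
  have hstep : ∀ s ∈ Set.Ioo (-ξ) 0, ε * m s ≤ D s := by
    intro s hs
    have hsneg : s < 0 := hs.2
    have hφs : ε ≤ φ s := by
      refine hφε s hsneg (lt_of_le_of_lt (ENNReal.ofReal_le_ofReal ?_) hξϱ)
      linarith [hs.1]
    rw [hDeq]
    have hb : ξ^2/(ξ^2+s^2) - η^2/(η^2+s^2) = s^2*(ξ^2-η^2)/((ξ^2+s^2)*(η^2+s^2)) := by
      field_simp; ring
    rw [hb]
    have habs : |s| = -s := abs_of_neg hsneg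
    have hs0 : s ≠ 0 := ne_of_lt hsneg
    have hBne : ((ξ^2+s^2)*(η^2+s^2)) ≠ 0 := by positivity
    have h1 : s^2*(ξ^2-η^2)/((ξ^2+s^2)*(η^2+s^2)) * (φ s / |s|)
        = φ s * ((-s)*(ξ^2-η^2)/((ξ^2+s^2)*(η^2+s^2))) := by
      rw [habs]; field_simp
    have h2 : ε * m s = ε * ((-s)*(ξ^2-η^2)/((ξ^2+s^2)*(η^2+s^2))) := by
      rw [hm]; simp only; rw [habs]
    rw [h1, h2]
    apply mul_le_mul_of_nonneg_right hφs
    have hns : (0:ℝ) ≤ -s := by linarith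
    positivity
  -- chain of integral inequalities
  have hmint : IntegrableOn m (Set.Ioo (-ξ) 0) :=
    (hmcont.integrableOn_Icc (a := -ξ) (b := 0)).mono_set Set.Ioo_subset_Icc_self
  have c1 : ∫ s in Set.Ioo (-ξ) 0, D s ≤ ∫ s, D s :=
    setIntegral_le_integral hDint (Filter.Eventually.of_forall hD0)
  have c2 : ∫ s in Set.Ioo (-ξ) 0, ε * m s ≤ ∫ s in Set.Ioo (-ξ) 0, D s :=
    setIntegral_mono_on (hmint.const_mul ε) hDint.integrableOn measurableSet_Ioo hstep
  have c3 : ∫ s in Set.Ioo (-ξ) 0, ε * m s = ε * ∫ s in Set.Ioo (-ξ) 0, m s :=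
    integral_const_mul ε m
  have c4 : ε * (Real.log ξ - Real.log η - Real.log 2 / 2) ≤ ε * ∫ s in Set.Ioo (-ξ) 0, m s :=
    mul_le_mul_of_nonneg_left (key_integral ξ η hη hle) (le_of_lt hε)
  have hchain : ε * (Real.log ξ - Real.log η - Real.log 2 / 2) ≤ ∫ s, D s := by
    calc ε * (Real.log ξ - Real.log η - Real.log 2 / 2)
        ≤ ε * ∫ s in Set.Ioo (-ξ) 0, m s := c4
      _ = ∫ s in Set.Ioo (-ξ) 0, ε * m s := c3.symm
      _ ≤ ∫ s in Set.Ioo (-ξ) 0, D s := c2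
      _ ≤ ∫ s, D s := c1
  -- ratio
  have hexpη : (0:ℝ) < c * Real.exp ((1/Real.pi) * ∫ s, g η s) := by positivity
  have hratio : ‖f ξ‖ / ‖f η‖
      = Real.exp ((1/Real.pi) * ∫ s, D s) := by
    rw [habs ξ hξ, habs η hη]
    rw [show (∫ s, D s) = (∫ s, g ξ s) - ∫ s, g η s from by
      rw [hDdef]; exact integral_sub (hInt' ξ hξ) (hInt' η hη)]
    rw [mul_div_mul_left _ _ (ne_of_gt hc), ← Real.exp_sub]
    congr 1
    ring
  rw [hratio]
  have hπ' : (0:ℝ) < 1/Real.pi := by positivity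
  have h5 := mul_le_mul_of_nonneg_left hchain (le_of_lt hπ')
  rw [Real.rpow_def_of_pos (div_pos hξ hη), ← Real.exp_add]
  apply Real.exp_le_exp.mpr
  rw [Real.log_div (ne_of_gt hξ) (ne_of_gt hη)]
  calc -(ε/Real.pi)*(Real.log 2/2) + (Real.log ξ - Real.log η)*(ε/Real.pi)
      = (1/Real.pi) * (ε * (Real.log ξ - Real.log η - Real.log 2/2)) := by ring
    _ ≤ (1/Real.pi) * ∫ s, D s := h5
end

section
/- Fix ϑ ∈ (0, π/2). There exists a constant C(ϑ) > 0 with the following property: if ζ ∈ ℂ satisfies Re ζ ≥ 0, |Arg ζ| ≤ π/2 (interpreting ζ on the imaginary axis appropriately) and additionally either |ζ| ∉ (ϱ₁, ϱ₂) or Arg ζ ≤ ϑ, and if 2ϱ₁ < s < ϱ₂/2, then 1/|ζ − is| ≤ C(ϑ)/|ζ + is|. In particular one may take C(ϑ) = max{3, 1/sin((π/2 − ϑ)/2)}. -/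
open scoped ENNReal

private lemma aux_quad (x y s r t : ℝ) (hs : 0 < s) (hr : 0 ≤ r)
    (ht0 : 0 ≤ t) (ht1 : t ≤ 1) (hy : y ≤ r * t) (hr2 : r ^ 2 = x ^ 2 + y ^ 2) :
    (x ^ 2 + (y + s) ^ 2) * ((1 - t) / 2) ≤ x ^ 2 + (y - s) ^ 2 := by
  nlinarith [mul_nonneg (by linarith : (0:ℝ) ≤ 1 + t) (sq_nonneg (r - s)),
    mul_nonneg (mul_nonneg hs.le hr) (sq_nonneg (1 - t)),
    mul_nonneg (mul_nonneg hs.le (by linarith : (0:ℝ) ≤ 3 - t))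
      (sub_nonneg.2 hy)]

/-- Geometric comparison of `|ζ + is|` and `|ζ − is|`: with
`C = max{3, 1/sin((π/2 − ϑ)/2)}`, if `Re ζ ≥ 0`, and either `|ζ| ∉ (ϱ₁, ϱ₂)` or
`Arg ζ ≤ ϑ`, then for `2ϱ₁ < s < ϱ₂/2` one has `1/|ζ − is| ≤ C/|ζ + is|`
(stated in the robust multiplicative form `|ζ + is| ≤ C·|ζ − is|`). -/
theorem stmt_15 (ϑ : ℝ) (hϑ : ϑ ∈ Set.Ioo 0 (Real.pi / 2)) :
    ∃ C : ℝ, C = max 3 (Real.sin ((Real.pi / 2 - ϑ) / 2))⁻¹ ∧ 0 < C ∧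
      ∀ (ϱ₁ : ℝ) (ϱ₂ : ℝ≥0∞) (ζ : ℂ) (s : ℝ),
        0 ≤ ϱ₁ → ENNReal.ofReal ϱ₁ ≤ ϱ₂ →
        0 ≤ ζ.re →
        (¬(ϱ₁ < ‖ζ‖ ∧ ENNReal.ofReal (‖ζ‖) < ϱ₂) ∨
          Complex.arg ζ ≤ ϑ) →
        2 * ϱ₁ < s → ENNReal.ofReal (2 * s) < ϱ₂ →
        ‖ζ + Complex.I * (s : ℂ)‖ ≤ C * ‖ζ - Complex.I * (s : ℂ)‖ := by
  obtain ⟨hϑ0, hϑπ⟩ := hϑ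
  have hpi := Real.pi_pos
  set δ : ℝ := (Real.pi / 2 - ϑ) / 2 with hδdef
  have hδ0 : 0 < δ := by unfold δ; linarith
  have hδπ : δ < Real.pi := by unfold δ; linarith
  have hsinδ : 0 < Real.sin δ := Real.sin_pos_of_pos_of_lt_pi hδ0 hδπ
  have hsinδsq : Real.sin δ ^ 2 = (1 - Real.sin ϑ) / 2 := by
    have h2δ : Real.cos (2 * δ) = Real.sin ϑ := by
      have : 2 * δ = Real.pi / 2 - ϑ := by unfold δ; ring
      rw [this, Real.cos_pi_div_two_sub]
    have hc2 := Real.cos_two_mul δ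
    have hsc := Real.sin_sq_add_cos_sq δ
    nlinarith [hc2, hsc, h2δ]
  refine ⟨max 3 (Real.sin δ)⁻¹, rfl, lt_max_of_lt_left (by norm_num), ?_⟩
  intro ϱ₁ ϱ₂ ζ s hϱ₁ hϱ hre hcase hs1 hs2
  set C : ℝ := max 3 (Real.sin δ)⁻¹ with hCdef
  have hC3 : (3 : ℝ) ≤ C := le_max_left _ _
  have hCinv : (Real.sin δ)⁻¹ ≤ C := le_max_right _ _
  have hs : 0 < s := by linarith
  set r : ℝ := ‖ζ‖ with hrdef
  have hr0 : 0 ≤ r := norm_nonneg ζ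
  have habs_is : ‖Complex.I * (s : ℂ)‖ = s := by
    simp [abs_of_pos hs]
  set a : ℝ := ‖ζ + Complex.I * (s : ℂ)‖ with hadef
  set b : ℝ := ‖ζ - Complex.I * (s : ℂ)‖ with hbdef
  have ha0 : 0 ≤ a := norm_nonneg _
  have hb0 : 0 ≤ b := norm_nonneg _
  have hplus : a ≤ r + s := by
    calc a ≤ ‖ζ‖ + ‖Complex.I * (s : ℂ)‖ := norm_add_le _ _
    _ = r + s := by rw [habs_is]
  rcases hcase with h | harg
  · -- modulus outside (ϱ₁, ϱ₂)
    push_neg at h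
    have key : r ≤ ϱ₁ ∨ 2 * s < r := by
      rcases le_or_gt r ϱ₁ with h1 | h1
      · exact Or.inl h1
      · right
        have := lt_of_lt_of_le hs2 (h h1)
        exact (ENNReal.ofReal_lt_ofReal_iff_of_nonneg (by linarith)).mp this
    have hminus : |r - s| ≤ b := by
      have := abs_norm_sub_norm_le ζ (Complex.I * (s : ℂ))
      rwa [habs_is] at this
    have h3 : r + s ≤ 3 * |r - s| := by
      rcases key with h1 | h1
      · rw [abs_of_nonpos (by linarith)]; linarith
      · rw [abs_of_nonneg (by linarith)]; linarith
    calc a ≤ r + s := hplus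
      _ ≤ 3 * |r - s| := h3
      _ ≤ 3 * b := by linarith
      _ ≤ C * b := mul_le_mul_of_nonneg_right hC3 hb0
  · -- angle case
    rcases eq_or_ne ζ 0 with rfl | hζ
    · have hab : a = b := by
        rw [hadef, hbdef]; simp
      have := mul_nonneg (by linarith : (0:ℝ) ≤ C - 1) hb0
      linarith [hab]
    · set y : ℝ := ζ.im with hydef
      set x : ℝ := ζ.re with hxdef
      set t : ℝ := Real.sin ϑ with htdef
      have ht0 : 0 < t := Real.sin_pos_of_pos_of_lt_pi hϑ0 (by linarith)
      have ht1 : t ≤ 1 := Real.sin_le_one ϑ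
      have hr0' : 0 < r := norm_pos_iff.mpr hζ
      have hargge : -(Real.pi / 2) ≤ ζ.arg ∧ ζ.arg ≤ Real.pi / 2 := by
        have := (Complex.abs_arg_le_pi_div_two_iff (z := ζ)).mpr hre
        exact abs_le.mp this
      have hsin_le : Real.sin ζ.arg ≤ t :=
        Real.strictMonoOn_sin.monotoneOn ⟨hargge.1, hargge.2⟩
          ⟨by linarith, by linarith⟩ harg
      have hyeq : y = r * Real.sin ζ.arg := by
        have hsa : Real.sin ζ.arg = y / r := Complex.sin_arg ζ
        rw [hsa]; field_simp
      have hy : y ≤ r * t := by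
        rw [hyeq]; exact mul_le_mul_of_nonneg_left hsin_le hr0
      have hr2 : r ^ 2 = x ^ 2 + y ^ 2 := by
        rw [hrdef, Complex.sq_norm, Complex.normSq_apply]; ring
      have ha2 : a ^ 2 = x ^ 2 + (y + s) ^ 2 := by
        rw [hadef, Complex.sq_norm, Complex.normSq_apply]
        simp only [Complex.add_re, Complex.add_im, Complex.mul_re, Complex.mul_im,
          Complex.I_re, Complex.I_im, Complex.ofReal_re, Complex.ofReal_im]
        ring
      have hb2 : b ^ 2 = x ^ 2 + (y - s) ^ 2 := by
        rw [hbdef, Complex.sq_norm, Complex.normSq_apply]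
        simp only [Complex.sub_re, Complex.sub_im, Complex.mul_re, Complex.mul_im,
          Complex.I_re, Complex.I_im, Complex.ofReal_re, Complex.ofReal_im]
        ring
      have hkey : a ^ 2 * ((1 - t) / 2) ≤ b ^ 2 := by
        rw [ha2, hb2]
        exact aux_quad x y s r t hs hr0 ht0.le ht1 hy hr2
      have hsq : (a * Real.sin δ) ^ 2 ≤ b ^ 2 := by
        have heq : (a * Real.sin δ) ^ 2 = a ^ 2 * ((1 - t) / 2) := by
          rw [mul_pow, hsinδsq]
        rw [heq]; exact hkey
      have h1 : a * Real.sin δ ≤ b := by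
        have h := Real.sqrt_le_sqrt hsq
        rwa [Real.sqrt_sq (mul_nonneg ha0 hsinδ.le), Real.sqrt_sq hb0] at h
      have h2 : a ≤ b / Real.sin δ := (le_div_iff₀ hsinδ).mpr h1
      calc a ≤ b / Real.sin δ := h2
        _ = (Real.sin δ)⁻¹ * b := by rw [div_eq_inv_mul]
        _ ≤ C * b := mul_le_mul_of_nonneg_right hCinv hb0
end
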